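/- arXiv:2110.00040 — 9 statements merged into one kernel-verified Lean document; each statement's English description precedes it below -/
import Mathlib

section
/- Let g : ℝ⁺ → ℝ⁺ satisfy lim_{n→∞} g(n+1)/g(n) = 1 (limit over positive integers n). Suppose f : ℝ⁺ → ℝ⁺ is eventually log-convex (i.e., log f is convex on some interval (M, ∞)), satisfies f(x+1) = g(x) f(x) for all x > 0, and f(1) = 1. Then for every x > 0, f(x) = lim_{n→∞} [g(n)⋯g(1) · g(n)^x] / [g(n+x) g(n+x-1) ⋯ g(x)], where the denominator is the product g(x+k) for k = 0, 1, …, n. -/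
open Filter Finset Real

/-- The sequence whose limit defines the gamma type function of `g`:
`(g(n)⋯g(1) · g(n)^x) / (g(x) g(x+1) ⋯ g(x+n))`. -/
noncomputable def gammaTypeSeq (g : ℝ → ℝ) (x : ℝ) (n : ℕ) : ℝ :=
  ((∏ k ∈ Finset.Icc 1 n, g k) * g n ^ x) / ∏ k ∈ Finset.range (n + 1), g (x + k)

private lemma fshift (g f : ℝ → ℝ) (hfe : ∀ x > 0, f (x + 1) = g x * f x) :
    ∀ (n : ℕ) (x : ℝ), 0 < x → f (x + n) = f x * ∏ k ∈ Finset.range n, g (x + k) := by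
  intro n
  induction n with
  | zero => simp
  | succ n ih =>
    intro x hx
    have hxn : (0:ℝ) < x + n := by positivity
    have h1 : f (x + ((n:ℕ)+1 : ℕ)) = f ((x + n) + 1) := by push_cast; ring_nf
    rw [h1, hfe _ hxn, ih x hx, Finset.prod_range_succ]
    ring

private lemma icc_prod (g : ℝ → ℝ) :
    ∀ n : ℕ, ∏ k ∈ Finset.Icc 1 n, g k = ∏ k ∈ Finset.range n, g (1 + k) := by
  intro n
  induction n with
  | zero => simp
  | succ n ih =>
    rw [Finset.prod_Icc_succ_top (by omega : 1 ≤ n + 1), ih, Finset.prod_range_succ]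
    push_cast [add_comm]
    rfl

private lemma ratio_calc (P A D E G q : ℝ) (hP : P ≠ 0) (hA : A ≠ 0) (hD : D ≠ 0)
    (hE : E ≠ 0) : P * G * (A * q) / (D * E) / (P * A / D) = G * q / E := by
  field_simp

private lemma shift_calc (P A D E G W : ℝ) (hD : D ≠ 0) (hE : E ≠ 0) (hW : W ≠ 0) :
    P * (A * G) / (D * E / W) = P * A / D * (W * (G / E)) := by
  field_simp

theorem webster_weakened (g f : ℝ → ℝ)
    (hg : ∀ x > 0, 0 < g x) (hf : ∀ x > 0, 0 < f x)
    (hseq : Tendsto (fun n : ℕ => g ((n : ℝ) + 1) / g n) atTop (nhds 1))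
    (hconv : ∃ M : ℝ, ConvexOn ℝ (Set.Ioi M) (fun x => Real.log (f x)))
    (hfe : ∀ x > 0, f (x + 1) = g x * f x)
    (hf1 : f 1 = 1) :
    ∀ x > 0, Tendsto (gammaTypeSeq g x) atTop (nhds (f x)) := by
  obtain ⟨M, hM⟩ := hconv
  -- positivity of the products
  have hP : ∀ n : ℕ, 0 < ∏ k ∈ Finset.Icc 1 n, g k := by
    intro n
    refine Finset.prod_pos fun k hk => hg _ ?_
    have : 1 ≤ k := (Finset.mem_Icc.mp hk).1
    exact_mod_cast Nat.lt_of_lt_of_le Nat.zero_lt_one this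
  have hD : ∀ x : ℝ, 0 < x → ∀ n : ℕ, 0 < ∏ k ∈ Finset.range n, g (x + k) := by
    intro x hx n
    exact Finset.prod_pos fun k _ => hg _ (by positivity)
  -- f at naturals ≥ 1
  have hfnat : ∀ n : ℕ, f (1 + n) = ∏ k ∈ Finset.Icc 1 n, g k := by
    intro n
    rw [fshift g f hfe n 1 one_pos, hf1, one_mul, icc_prod]
  -- ratio of g at shifted naturals tends to 1 from hseq
  have hratio : Tendsto (fun n : ℕ => g n / g ((n:ℝ) + 1)) atTop (nhds 1) := by
    have := hseq.inv₀ one_ne_zero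
    simpa [inv_div] using this
  -- Base case : x ∈ (0, 1]
  have base : ∀ x : ℝ, 0 < x → x ≤ 1 → Tendsto (gammaTypeSeq g x) atTop (nhds (f x)) := by
    intro x hx hx1
    have hfx : 0 < f x := hf x hx
    -- lower bound sequence
    have hlow : Tendsto (fun n : ℕ => f x * (g n / g ((n:ℝ) + 1)) ^ x) atTop
        (nhds (f x)) := by
      have h1 : Tendsto (fun n : ℕ => (g n / g ((n:ℝ) + 1)) ^ x) atTop (nhds 1) := by
        have := hratio.rpow_const (p := x) (Or.inl one_ne_zero)
        simpa using this
      simpa using (tendsto_const_nhds (x := f x)).mul h1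
    obtain ⟨N₀, hN₀⟩ := exists_nat_gt (max M 0)
    have key : ∀ n : ℕ, N₀ + 1 ≤ n →
        f x * (g n / g ((n:ℝ) + 1)) ^ x ≤ gammaTypeSeq g x n ∧ gammaTypeSeq g x n ≤ f x := by
      intro n hn
      have hNn : (N₀ : ℝ) ≤ (n : ℝ) := by exact_mod_cast Nat.le_of_succ_le hn
      have hnM : M < (n : ℝ) := lt_of_le_of_lt (le_max_left M 0) (lt_of_lt_of_le hN₀ hNn)
      have hn0 : (0:ℝ) < (n : ℝ) :=
        lt_of_le_of_lt (le_max_right M 0) (lt_of_lt_of_le hN₀ hNn)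
      have hgn : 0 < g n := hg _ hn0
      have hgn1 : 0 < g ((n:ℝ) + 1) := hg _ (by linarith)
      have hPpos := hP n
      have hDpos := hD x hx (n + 1)
      set P := ∏ k ∈ Finset.Icc 1 n, g k with hPdef
      set D := ∏ k ∈ Finset.range (n + 1), g (x + k) with hDdef
      have hgnx : (0:ℝ) < g n ^ x := Real.rpow_pos_of_pos hgn x
      have hgn1x : (0:ℝ) < g ((n:ℝ) + 1) ^ x := Real.rpow_pos_of_pos hgn1 x
      -- convexity slope inequalities at a = n+1
      have memn : (n : ℝ) ∈ Set.Ioi M := hnM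
      have memc : (n : ℝ) + 1 ∈ Set.Ioi M := by simp only [Set.mem_Ioi]; linarith
      have memq : (n : ℝ) + 1 + x ∈ Set.Ioi M := by simp only [Set.mem_Ioi]; linarith
      have memr : (n : ℝ) + 2 ∈ Set.Ioi M := by simp only [Set.mem_Ioi]; linarith
      have ineq1 := hM.secant_mono memc memn memq (by intro h; linarith)
        (by intro h; linarith) (by linarith)
      have ineq2 := hM.secant_mono memc memq memr (by intro h; linarith)
        (by intro h; linarith) (by linarith)
      -- values of log f at the relevant points
      have hvc : f ((n:ℝ) + 1) = P := by rw [add_comm]; exact hfnat n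
      have hfcpos : 0 < f ((n:ℝ) + 1) := by rw [hvc]; exact hPpos
      have hvp : f ((n:ℝ) + 1) = g n * f n := hfe _ hn0
      have hvq : f ((n:ℝ) + 1 + x) = f x * D := by
        have := fshift g f hfe (n + 1) x hx
        rw [hDdef]
        rw [← this]
        norm_num
        ring_nf
      have hvr : f ((n:ℝ) + 2) = g ((n:ℝ) + 1) * f ((n:ℝ) + 1) := by
        have := hfe ((n:ℝ) + 1) (by linarith)
        rw [← this]
        ring_nf
      have hfnpos : 0 < f n := hf _ hn0
      -- rewrite slopes
      have e1 : (Real.log (f n) - Real.log (f ((n:ℝ) + 1))) / ((n:ℝ) - ((n:ℝ) + 1))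
          = Real.log (g n) := by
        rw [hvp, Real.log_mul hgn.ne' hfnpos.ne']
        have hd : (n:ℝ) - ((n:ℝ) + 1) = -1 := by ring
        rw [hd]
        ring
      have e2 : (Real.log (f ((n:ℝ) + 2)) - Real.log (f ((n:ℝ) + 1))) / ((n:ℝ) + 2 - ((n:ℝ) + 1))
          = Real.log (g ((n:ℝ) + 1)) := by
        rw [hvr, Real.log_mul hgn1.ne' hfcpos.ne']
        have hd : (n:ℝ) + 2 - ((n:ℝ) + 1) = 1 := by ring
        rw [hd]
        ring
      have e3 : (n:ℝ) + 1 + x - ((n:ℝ) + 1) = x := by ring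
      rw [e1, e3] at ineq1
      rw [e2, e3] at ineq2
      -- the middle quantity
      have hmid : Real.log (f ((n:ℝ) + 1 + x)) - Real.log (f ((n:ℝ) + 1))
          = Real.log (f x * D / P) := by
        rw [hvq, hvc, Real.log_div (by positivity) hPpos.ne']
      rw [hmid] at ineq1 ineq2
      have hfxD : (0:ℝ) < f x * D / P := by positivity
      -- multiply through by x
      have i1 : g n ^ x ≤ f x * D / P := by
        rw [← Real.log_le_log_iff hgnx hfxD, Real.log_rpow hgn]
        have := (le_div_iff₀ hx).mp ineq1
        linarith
      have i2 : f x * D / P ≤ g ((n:ℝ) + 1) ^ x := by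
        rw [← Real.log_le_log_iff hfxD hgn1x, Real.log_rpow hgn1]
        have := (div_le_iff₀ hx).mp ineq2
        linarith
      constructor
      · -- lower bound
        rw [gammaTypeSeq, ← hPdef, ← hDdef, Real.div_rpow hgn.le hgn1.le,
          le_div_iff₀ hDpos]
        have h5 : f x * D ≤ g ((n:ℝ) + 1) ^ x * P := by
          rw [div_le_iff₀ hPpos] at i2
          linarith
        have e : f x * (g n ^ x / g ((n:ℝ) + 1) ^ x) * D = f x * D * g n ^ x / g ((n:ℝ) + 1) ^ x := by
          ring
        rw [e, div_le_iff₀ hgn1x]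
        have h6 : f x * D * g n ^ x ≤ g ((n:ℝ) + 1) ^ x * P * g n ^ x :=
          mul_le_mul_of_nonneg_right h5 hgnx.le
        linarith [h6]
      · -- upper bound
        rw [gammaTypeSeq, ← hPdef, ← hDdef, div_le_iff₀ hDpos]
        rw [le_div_iff₀ hPpos] at i1
        linarith [i1]
    refine tendsto_of_tendsto_of_tendsto_of_le_of_le' hlow tendsto_const_nhds ?_ ?_
    · filter_upwards [eventually_ge_atTop (N₀ + 1)] with n hn
      exact (key n hn).1
    · filter_upwards [eventually_ge_atTop (N₀ + 1)] with n hn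
      exact (key n hn).2
  -- step lemma
  have step : ∀ x : ℝ, 0 < x → Tendsto (gammaTypeSeq g x) atTop (nhds (f x)) →
      Tendsto (gammaTypeSeq g (x + 1)) atTop (nhds (f (x + 1))) := by
    intro x hx H
    have hfx : 0 < f x := hf x hx
    have hgx : 0 < g x := hg x hx
    -- positivity facts
    have hgnpos : ∀ n : ℕ, 1 ≤ n → 0 < g n := by
      intro n hn
      exact hg _ (by exact_mod_cast Nat.lt_of_lt_of_le Nat.zero_lt_one hn)
    have hgxn : ∀ n : ℕ, 0 < g (x + (n:ℝ) + 1) := fun n => hg _ (by positivity)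
    -- ratio of consecutive terms tends to 1
    have hA1 : Tendsto (fun n : ℕ => gammaTypeSeq g x (n + 1) / gammaTypeSeq g x n)
        atTop (nhds 1) := by
      have h := Filter.Tendsto.div (f := fun n : ℕ => gammaTypeSeq g x (n + 1))
        (g := fun n : ℕ => gammaTypeSeq g x n)
        (H.comp (tendsto_add_atTop_nat 1)) H hfx.ne'
      simp only [Pi.div_def] at h
      simpa [div_self hfx.ne'] using h
    have hgr : Tendsto (fun n : ℕ => (g ((n:ℝ) + 1) / g n) ^ x) atTop (nhds 1) := by
      simpa using hseq.rpow_const (p := x) (Or.inl one_ne_zero)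
    -- formula for the ratio of consecutive terms
    have hform : ∀ n : ℕ, 1 ≤ n → gammaTypeSeq g x (n + 1) / gammaTypeSeq g x n
        = g ((n:ℝ) + 1) * (g ((n:ℝ) + 1) / g n) ^ x / g (x + (n:ℝ) + 1) := by
      intro n hn
      have hgn : 0 < g n := hgnpos n hn
      have hgn1 : 0 < g ((n:ℝ) + 1) := hg _ (by positivity)
      have hPpos := hP n
      have hDpos := hD x hx (n + 1)
      have hc1 : ((n + 1 : ℕ) : ℝ) = (n : ℝ) + 1 := by push_cast; ring
      have eP : ∏ k ∈ Finset.Icc 1 (n + 1), g k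
          = (∏ k ∈ Finset.Icc 1 n, g k) * g ((n:ℝ) + 1) := by
        rw [Finset.prod_Icc_succ_top (by omega : 1 ≤ n + 1), hc1]
      have eD : ∏ k ∈ Finset.range (n + 2), g (x + k)
          = (∏ k ∈ Finset.range (n + 1), g (x + k)) * g (x + (n:ℝ) + 1) := by
        rw [Finset.prod_range_succ, hc1]
        ring_nf
      have egx : g ((n:ℝ) + 1) ^ x = g n ^ x * (g ((n:ℝ) + 1) / g n) ^ x := by
        rw [← Real.mul_rpow hgn.le (by positivity)]
        rw [mul_div_cancel₀ _ hgn.ne']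
      rw [gammaTypeSeq, gammaTypeSeq, eP, eD, hc1, egx]
      have hgnx : (0:ℝ) < g n ^ x := Real.rpow_pos_of_pos hgn x
      exact ratio_calc _ _ _ _ _ _ hPpos.ne' hgnx.ne' hDpos.ne' (hgxn n).ne'
    -- g(n+1)/g(x+n+1) → 1
    have hq1 : Tendsto (fun n : ℕ => g ((n:ℝ) + 1) / g (x + (n:ℝ) + 1)) atTop (nhds 1) := by
      have h := Filter.Tendsto.div (f := fun n : ℕ => gammaTypeSeq g x (n + 1) / gammaTypeSeq g x n)
        (g := fun n : ℕ => (g ((n:ℝ) + 1) / g n) ^ x) hA1 hgr one_ne_zero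
      rw [div_one] at h
      refine h.congr' ?_
      filter_upwards [eventually_ge_atTop 1] with n hn
      have hgn : 0 < g n := hgnpos n hn
      have hgn1 : 0 < g ((n:ℝ) + 1) := hg _ (by positivity)
      have hgrx : (0:ℝ) < (g ((n:ℝ) + 1) / g n) ^ x := Real.rpow_pos_of_pos (by positivity) x
      show gammaTypeSeq g x (n + 1) / gammaTypeSeq g x n / (g ((n:ℝ) + 1) / g n) ^ x
          = g ((n:ℝ) + 1) / g (x + (n:ℝ) + 1)
      rw [hform n hn, div_div,
        mul_comm (g (x + (n:ℝ) + 1)) ((g ((n:ℝ) + 1) / g n) ^ x),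
        mul_comm (g ((n:ℝ) + 1)) ((g ((n:ℝ) + 1) / g n) ^ x),
        mul_div_mul_left _ _ hgrx.ne']
    -- g(n)/g(x+n+1) → 1
    have hq2 : Tendsto (fun n : ℕ => g n / g (x + (n:ℝ) + 1)) atTop (nhds 1) := by
      have h := hratio.mul hq1
      rw [one_mul] at h
      refine h.congr ?_
      intro n
      have hgn1 : (0:ℝ) < g ((n:ℝ) + 1) := hg _ (by positivity)
      rw [div_mul_div_comm, mul_comm (g n) (g ((n:ℝ) + 1)),
        mul_div_mul_left _ _ hgn1.ne']
    -- relate gammaTypeSeq at x+1 to gammaTypeSeq at x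
    have hform2 : ∀ n : ℕ, 1 ≤ n → gammaTypeSeq g (x + 1) n
        = gammaTypeSeq g x n * (g x * (g n / g (x + (n:ℝ) + 1))) := by
      intro n hn
      have hgn : 0 < g n := hgnpos n hn
      have hPpos := hP n
      have hDpos := hD x hx (n + 1)
      have hc1 : ((n + 1 : ℕ) : ℝ) = (n : ℝ) + 1 := by push_cast; ring
      have eD : ∏ k ∈ Finset.range (n + 1), g (x + 1 + (k:ℝ))
          = (∏ k ∈ Finset.range (n + 1), g (x + (k:ℝ))) * g (x + (n:ℝ) + 1) / g x := by
        have h1 : ∏ k ∈ Finset.range (n + 2), g (x + (k:ℝ))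
            = (∏ k ∈ Finset.range (n + 1), g (x + ((k + 1 : ℕ):ℝ))) * g (x + ((0:ℕ):ℝ)) :=
          Finset.prod_range_succ' (fun k : ℕ => g (x + (k:ℝ))) (n + 1)
        have h2 : ∏ k ∈ Finset.range (n + 2), g (x + (k:ℝ))
            = (∏ k ∈ Finset.range (n + 1), g (x + (k:ℝ))) * g (x + (n:ℝ) + 1) := by
          rw [Finset.prod_range_succ, hc1]
          congr 1
          ring
        have h3 : ∏ k ∈ Finset.range (n + 1), g (x + 1 + (k:ℝ))
            = ∏ k ∈ Finset.range (n + 1), g (x + ((k + 1 : ℕ):ℝ)) := by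
          apply Finset.prod_congr rfl
          intro k _
          congr 1
          push_cast
          ring
        rw [h3]
        have h4 := h1.symm.trans h2
        simp only [Nat.cast_zero, add_zero] at h4
        rw [eq_div_iff hgx.ne']
        linarith [h4]
      rw [gammaTypeSeq, gammaTypeSeq, eD, Real.rpow_add_one hgn.ne']
      exact shift_calc _ _ _ _ _ _ hDpos.ne' (hgxn n).ne' hgx.ne'
    -- conclude
    have hlim : Tendsto (fun n : ℕ => gammaTypeSeq g x n * (g x * (g n / g (x + (n:ℝ) + 1))))
        atTop (nhds (f (x + 1))) := by
      have h := H.mul ((tendsto_const_nhds (x := g x)).mul hq2)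
      rw [mul_one] at h
      rw [hfe x hx, mul_comm (g x) (f x)]
      exact h
    refine hlim.congr' ?_
    filter_upwards [eventually_ge_atTop 1] with n hn
    exact (hform2 n hn).symm
  -- induction
  have main : ∀ n : ℕ, ∀ x : ℝ, 0 < x → x ≤ n →
      Tendsto (gammaTypeSeq g x) atTop (nhds (f x)) := by
    intro n
    induction n with
    | zero => intro x hx hxn; norm_num at hxn; linarith
    | succ n ih =>
      intro x hx hxn
      by_cases hx1 : x ≤ 1
      · exact base x hx hx1
      · push_neg at hx1
        have h1 : 0 < x - 1 := by linarith
        have h2 : x - 1 ≤ n := by push_cast at hxn ⊢; linarith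
        have := step (x - 1) h1 (ih (x - 1) h1 h2)
        simpa using this
  intro x hx
  exact main ⌈x⌉₊ x hx (Nat.le_ceil x)
end

section
/- Let g : ℝ⁺ → ℝ⁺ be eventually log-concave (log g concave on some interval (M,∞)) and suppose g(n+1)/g(n) → 1 as the positive integer n → ∞. Then lim_{x→∞} g(x+w)/g(x) = 1 for every w > 0 (limit over real x). -/
open Filter Real

lemma slope_anti_of_concaveOn {f : ℝ → ℝ} {M : ℝ}
    (hf : ConcaveOn ℝ (Set.Ioi M) f) {a b c d : ℝ}
    (ha : M < a) (hab : a < b) (hbc : b ≤ c) (hcd : c < d) :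
    (f d - f c) / (d - c) ≤ (f b - f a) / (b - a) := by
  have hb : M < b := ha.trans hab
  have hc : M < c := lt_of_lt_of_le hb hbc
  have hd : M < d := hc.trans hcd
  rcases eq_or_lt_of_le hbc with rfl | h
  · exact hf.slope_anti_adjacent ha hd hab hcd
  · calc (f d - f c) / (d - c) ≤ (f c - f b) / (c - b) :=
          hf.slope_anti_adjacent hb hd h hcd
      _ ≤ (f b - f a) / (b - a) := hf.slope_anti_adjacent ha hc hab h

theorem sequential_implies_continuous_of_eventually_logConcave (g : ℝ → ℝ)
    (hg : ∀ x > 0, 0 < g x)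
    (hconc : ∃ M : ℝ, ConcaveOn ℝ (Set.Ioi M) (fun x => Real.log (g x)))
    (hseq : Tendsto (fun n : ℕ => g ((n : ℝ) + 1) / g n) atTop (nhds 1)) :
    ∀ w > 0, Tendsto (fun x : ℝ => g (x + w) / g x) atTop (nhds 1) := by
  obtain ⟨M₀, hconc⟩ := hconc
  set f : ℝ → ℝ := fun x => Real.log (g x) with hf
  set M : ℝ := max M₀ 0 with hM
  have hconc' : ConcaveOn ℝ (Set.Ioi M) f :=
    hconc.subset (Set.Ioi_subset_Ioi (le_max_left _ _)) (convex_Ioi _)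
  -- sequential limit of log differences
  have h0 : Tendsto (fun n : ℕ => f ((n : ℝ) + 1) - f n) atTop (nhds 0) := by
    have hlog : Tendsto (fun n : ℕ => Real.log (g ((n : ℝ) + 1) / g n)) atTop
        (nhds (Real.log 1)) :=
      ((Real.continuousAt_log one_ne_zero).tendsto).comp hseq
    rw [Real.log_one] at hlog
    refine hlog.congr' ?_
    filter_upwards [eventually_ge_atTop 1] with n hn
    have hn0 : (0 : ℝ) < (n : ℝ) := by exact_mod_cast hn
    have hn1 : (0 : ℝ) < (n : ℝ) + 1 := by linarith
    exact Real.log_div (ne_of_gt (hg _ hn1)) (ne_of_gt (hg _ hn0))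
  intro w hw
  -- upper bound sequence: index ⌊x-1⌋₊
  have hupT : Tendsto (fun x : ℝ => w * (f ((⌊x - 1⌋₊ : ℝ) + 1) - f (⌊x - 1⌋₊ : ℝ)))
      atTop (nhds 0) := by
    have hidx : Tendsto (fun x : ℝ => ⌊x - 1⌋₊) atTop atTop :=
      tendsto_nat_floor_atTop.comp (tendsto_atTop_add_const_right atTop (-1) tendsto_id)
    have := (h0.comp hidx).const_mul w
    simpa [Function.comp, sub_eq_add_neg, mul_zero] using this
  -- lower bound sequence: index ⌈x+w⌉₊
  have hloT : Tendsto (fun x : ℝ => w * (f ((⌈x + w⌉₊ : ℝ) + 1) - f (⌈x + w⌉₊ : ℝ)))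
      atTop (nhds 0) := by
    have hidx : Tendsto (fun x : ℝ => ⌈x + w⌉₊) atTop atTop :=
      tendsto_nat_ceil_atTop.comp (tendsto_atTop_add_const_right atTop w tendsto_id)
    have := (h0.comp hidx).const_mul w
    simpa [Function.comp, mul_zero] using this
  -- squeeze
  have hsq : Tendsto (fun x : ℝ => f (x + w) - f x) atTop (nhds 0) := by
    refine tendsto_of_tendsto_of_tendsto_of_le_of_le' hloT hupT ?_ ?_
    · filter_upwards [eventually_ge_atTop (M + 2)] with x hx
      have hMx : M < x := by linarith [le_max_right M₀ (0:ℝ)]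
      have hxw : x < x + w := by linarith
      have hbc : x + w ≤ (⌈x + w⌉₊ : ℝ) := Nat.le_ceil _
      have hcd : (⌈x + w⌉₊ : ℝ) < (⌈x + w⌉₊ : ℝ) + 1 := by linarith
      have key := slope_anti_of_concaveOn hconc' hMx hxw hbc hcd
      have hw' : x + w - x = w := by ring
      have h1 : ((⌈x + w⌉₊ : ℝ) + 1) - (⌈x + w⌉₊ : ℝ) = 1 := by ring
      rw [hw', h1, div_one] at key
      calc w * (f ((⌈x + w⌉₊ : ℝ) + 1) - f (⌈x + w⌉₊ : ℝ))
          ≤ w * ((f (x + w) - f x) / w) := by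
            exact mul_le_mul_of_nonneg_left key (le_of_lt hw)
        _ = f (x + w) - f x := by field_simp
    · filter_upwards [eventually_ge_atTop (M + 2)] with x hx
      have hM0 : (0 : ℝ) ≤ M := le_max_right _ _
      have hx1 : (0 : ℝ) ≤ x - 1 := by linarith
      have ha : M < (⌊x - 1⌋₊ : ℝ) := by
        have := Nat.sub_one_lt_floor (x - 1)
        linarith
      have hab : (⌊x - 1⌋₊ : ℝ) < (⌊x - 1⌋₊ : ℝ) + 1 := by linarith
      have hbc : (⌊x - 1⌋₊ : ℝ) + 1 ≤ x := by
        have := Nat.floor_le hx1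
        linarith
      have hcd : x < x + w := by linarith
      have key := slope_anti_of_concaveOn hconc' ha hab hbc hcd
      have hw' : x + w - x = w := by ring
      have h1 : ((⌊x - 1⌋₊ : ℝ) + 1) - (⌊x - 1⌋₊ : ℝ) = 1 := by ring
      rw [hw', h1, div_one] at key
      calc f (x + w) - f x = w * ((f (x + w) - f x) / w) := by field_simp
        _ ≤ w * (f ((⌊x - 1⌋₊ : ℝ) + 1) - f (⌊x - 1⌋₊ : ℝ)) :=
            mul_le_mul_of_nonneg_left key (le_of_lt hw)
  -- exponentiate
  have hexp : Tendsto (fun x : ℝ => Real.exp (f (x + w) - f x)) atTop (nhds 1) := by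
    have := (Real.continuous_exp.tendsto 0).comp hsq
    simpa [Real.exp_zero, Function.comp_def] using this
  refine hexp.congr' ?_
  filter_upwards [eventually_gt_atTop 0] with x hx
  have hxw : (0 : ℝ) < x + w := by linarith
  rw [hf]
  simp only
  rw [Real.exp_sub, Real.exp_log (hg _ hxw), Real.exp_log (hg _ hx)]
end

section
/- Let g : ℝ⁺ → ℝ⁺ satisfy g(n+1)/g(n) → l as n → ∞ with 0 < l ≤ 1, and let f : ℝ⁺ → ℝ⁺ be eventually log-convex with f(x+1) = g(x) f(x) for all x > 0. Then for every x > 0, f(x)/f(1) = l^{(x²+x)/2} · lim_{n→∞} [g(n)⋯g(1) g(n)^x] / [g(n+x)⋯g(x)]. In particular f is uniquely determined by g and the value f(1). -/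
open Filter Finset Real

theorem webster_generalized_logConvex (g f : ℝ → ℝ) (l : ℝ)
    (hg : ∀ x > 0, 0 < g x) (hf : ∀ x > 0, 0 < f x)
    (hl0 : 0 < l) (hl1 : l ≤ 1)
    (hseq : Tendsto (fun n : ℕ => g ((n : ℝ) + 1) / g n) atTop (nhds l))
    (hconv : ∃ M : ℝ, ConvexOn ℝ (Set.Ioi M) (fun x => Real.log (f x)))
    (hfe : ∀ x > 0, f (x + 1) = g x * f x) :
    ∀ x > 0, Tendsto (fun n : ℕ => l ^ ((x ^ 2 + x) / 2) * gammaTypeSeq g x n)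
      atTop (nhds (f x / f 1)) := by
  obtain ⟨M, hM⟩ := hconv
  set h : ℝ → ℝ := fun y => Real.log (f y) with hh
  have hM' : ConvexOn ℝ (Set.Ioi M) h := hM
  set N : ℕ := ⌈M⌉₊ + 1 with hNdef
  have hN1 : 1 ≤ N := Nat.le_add_left 1 _
  have hN : ∀ n : ℕ, N ≤ n → M < (n : ℝ) := by
    intro n hn
    have h1 : M ≤ (⌈M⌉₊ : ℝ) := Nat.le_ceil M
    have h2 : (⌈M⌉₊ : ℝ) < (n : ℝ) := by exact_mod_cast Nat.lt_of_lt_of_le (Nat.lt_succ_self _) hn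
    linarith
  have hnpos : ∀ n : ℕ, 1 ≤ n → (0 : ℝ) < (n : ℝ) := by
    intro n hn; exact_mod_cast Nat.lt_of_lt_of_le Nat.zero_lt_one hn
  have hgpos : ∀ n : ℕ, 1 ≤ n → 0 < g n := fun n hn => hg _ (hnpos n hn)
  have hlog : ∀ y : ℝ, 0 < y → h (y + 1) = Real.log (g y) + h y := by
    intro y hy
    simp only [hh]
    rw [hfe y hy, Real.log_mul (ne_of_gt (hg y hy)) (ne_of_gt (hf y hy))]
  -- monotonicity of log g on integers, hence l = 1
  have hmono : ∀ n : ℕ, N ≤ n → Real.log (g n) ≤ Real.log (g ((n : ℝ) + 1)) := by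
    intro n hn
    have hMn := hN n hn
    have npos : (0 : ℝ) < (n : ℝ) := hnpos n (le_trans hN1 hn)
    have key := hM'.slope_mono_adjacent (x := (n : ℝ)) (y := (n : ℝ) + 1) (z := (n : ℝ) + 2)
      (Set.mem_Ioi.2 hMn) (Set.mem_Ioi.2 (by linarith)) (by linarith) (by linarith)
    rw [show (n : ℝ) + 1 - n = 1 by ring, show (n : ℝ) + 2 - ((n : ℝ) + 1) = 1 by ring,
      div_one, div_one] at key
    have e1 : h ((n : ℝ) + 1) = Real.log (g n) + h n := hlog n npos
    have e2 : h ((n : ℝ) + 2) = Real.log (g ((n : ℝ) + 1)) + h ((n : ℝ) + 1) := by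
      have := hlog ((n : ℝ) + 1) (by linarith)
      rwa [show (n : ℝ) + 1 + 1 = (n : ℝ) + 2 by ring] at this
    rw [e1, e2] at key
    linarith
  have hl : l = 1 := by
    refine le_antisymm hl1 (ge_of_tendsto hseq ?_)
    filter_upwards [eventually_ge_atTop N] with n hn
    have hgn := hgpos n (le_trans hN1 hn)
    have hgn1 : 0 < g ((n : ℝ) + 1) := hg _ (by linarith [hnpos n (le_trans hN1 hn)])
    rw [le_div_iff₀ hgn, one_mul]
    exact (Real.log_le_log_iff hgn hgn1).1 (hmono n hn)
  subst hl
  -- the ratio of consecutive log g's tends to 0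
  have ht : Tendsto (fun n : ℕ => Real.log (g ((n : ℝ) + 1)) - Real.log (g n)) atTop (nhds 0) := by
    have hc : Tendsto (fun n : ℕ => Real.log (g ((n : ℝ) + 1) / g n)) atTop (nhds 0) := by
      have := (Real.continuousAt_log one_ne_zero).tendsto.comp hseq
      rw [Real.log_one] at this; exact this
    refine hc.congr' ?_
    filter_upwards [eventually_ge_atTop N] with n hn
    have hgn := hgpos n (le_trans hN1 hn)
    have hgn1 : 0 < g ((n : ℝ) + 1) := hg _ (by linarith [hnpos n (le_trans hN1 hn)])
    exact Real.log_div (ne_of_gt hgn1) (ne_of_gt hgn)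
  have hshift : ∀ j : ℕ,
      Tendsto (fun n : ℕ => Real.log (g ((n : ℝ) + j)) - Real.log (g n)) atTop (nhds 0) := by
    intro j
    induction j with
    | zero => simp only [Nat.cast_zero, add_zero, sub_self]; exact tendsto_const_nhds
    | succ j ih =>
      have h2 := ht.comp (tendsto_add_atTop_nat j)
      have h3 := h2.add ih
      rw [add_zero] at h3
      refine h3.congr fun n => ?_
      simp only [Function.comp]
      push_cast
      ring
  intro x hx
  set m : ℕ := ⌊x⌋₊ + 1 with hmdef
  have hxm : x < (m : ℝ) := by
    have := Nat.lt_floor_add_one x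
    push_cast
    exact_mod_cast this
  have hm0 : (0 : ℝ) < (m : ℝ) := lt_trans hx hxm
  -- product identities
  have hA : ∀ n : ℕ, f ((n : ℝ) + 1) = (∏ k ∈ Finset.Icc 1 n, g k) * f 1 := by
    intro n
    induction n with
    | zero => simp
    | succ n ih =>
      rw [Finset.prod_Icc_succ_top (Nat.succ_le_succ (Nat.zero_le n))]
      push_cast
      rw [show (n : ℝ) + 1 + 1 = ((n : ℝ) + 1) + 1 by ring, hfe ((n : ℝ) + 1) (by positivity), ih]
      ring
  have hB : ∀ n : ℕ, f (x + n + 1) = (∏ k ∈ Finset.range (n + 1), g (x + k)) * f x := by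
    intro n
    induction n with
    | zero => simpa using hfe x hx
    | succ n ih =>
      rw [Finset.prod_range_succ]
      push_cast
      rw [show x + ((n : ℝ) + 1) + 1 = (x + n + 1) + 1 by ring, hfe (x + n + 1) (by positivity), ih]
      ring
  set S : ℕ → ℝ := fun n => g n ^ x * f ((n : ℝ) + 1) / f (x + n + 1) with hSdef
  have hf1 : 0 < f 1 := hf 1 one_pos
  have heq : ∀ n : ℕ, gammaTypeSeq g x n = (f x / f 1) * S n := by
    intro n
    have hfn1 : 0 < f ((n : ℝ) + 1) := hf _ (by positivity)
    have hfxn : 0 < f (x + n + 1) := hf _ (by positivity)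
    have hfx : 0 < f x := hf x hx
    unfold gammaTypeSeq
    rw [show (∏ k ∈ Finset.Icc 1 n, g (k : ℝ)) = f ((n : ℝ) + 1) / f 1 by
        rw [hA n]; field_simp,
      show (∏ k ∈ Finset.range (n + 1), g (x + (k : ℝ))) = f (x + n + 1) / f x by
        rw [hB n]; field_simp]
    simp only [hSdef]
    field_simp
  have hSpos : ∀ n : ℕ, 1 ≤ n → 0 < S n := by
    intro n hn
    have := hgpos n hn
    have h1 : 0 < f ((n : ℝ) + 1) := hf _ (by positivity)
    have h2 : 0 < f (x + n + 1) := hf _ (by positivity)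
    simp only [hSdef]
    positivity
  have hlogS : ∀ n : ℕ, 1 ≤ n →
      Real.log (S n) = x * Real.log (g n) + h ((n : ℝ) + 1) - h (x + n + 1) := by
    intro n hn
    have hgn := hgpos n hn
    have h1 : 0 < f ((n : ℝ) + 1) := hf _ (by positivity)
    have h2 : 0 < f (x + n + 1) := hf _ (by positivity)
    simp only [hSdef, hh]
    rw [Real.log_div (by positivity) (ne_of_gt h2),
      Real.log_mul (by positivity) (ne_of_gt h1), Real.log_rpow hgn]
  -- telescoping
  have tele : ∀ p : ℕ, ∀ y : ℝ, 0 < y →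
      h (y + p) = (∑ j ∈ Finset.range p, Real.log (g (y + j))) + h y := by
    intro p
    induction p with
    | zero => intro y hy; simp
    | succ p ih =>
      intro y hy
      rw [Finset.sum_range_succ]
      push_cast
      rw [show y + ((p : ℝ) + 1) = (y + p) + 1 by ring, hlog (y + p) (by positivity), ih y hy]
      ring
  -- convexity bounds
  have hlow : ∀ n : ℕ, N ≤ n → x * Real.log (g n) ≤ h (x + n + 1) - h ((n : ℝ) + 1) := by
    intro n hn
    have hMn := hN n hn
    have npos : (0 : ℝ) < (n : ℝ) := hnpos n (le_trans hN1 hn)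
    have key := hM'.slope_mono_adjacent (x := (n : ℝ)) (y := (n : ℝ) + 1) (z := (n : ℝ) + 1 + x)
      (Set.mem_Ioi.2 hMn) (Set.mem_Ioi.2 (by linarith)) (by linarith) (by linarith)
    rw [show (n : ℝ) + 1 - n = 1 by ring, div_one,
      show (n : ℝ) + 1 + x - ((n : ℝ) + 1) = x by ring,
      show (n : ℝ) + 1 + x = x + n + 1 by ring] at key
    have e1 : h ((n : ℝ) + 1) = Real.log (g n) + h n := hlog n npos
    have key2 := (le_div_iff₀ hx).1
      (by linarith [key, e1] : Real.log (g n) ≤ (h (x + n + 1) - h ((n : ℝ) + 1)) / x)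
    linarith [key2]
  have hup : ∀ n : ℕ, N ≤ n → h (x + n + 1) - h ((n : ℝ) + 1) ≤
      (x / m) * ∑ j ∈ Finset.range m, Real.log (g ((n : ℝ) + 1 + j)) := by
    intro n hn
    have hMn := hN n hn
    have npos : (0 : ℝ) < (n : ℝ) := hnpos n (le_trans hN1 hn)
    have key := hM'.secant_mono_aux2 (x := (n : ℝ) + 1) (y := (n : ℝ) + 1 + x)
      (z := (n : ℝ) + 1 + m) (Set.mem_Ioi.2 (by linarith)) (Set.mem_Ioi.2 (by linarith))
      (by linarith) (by linarith)
    rw [show (n : ℝ) + 1 + x - ((n : ℝ) + 1) = x by ring,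
      show (n : ℝ) + 1 + (m : ℝ) - ((n : ℝ) + 1) = (m : ℝ) by ring,
      show (n : ℝ) + 1 + x = x + n + 1 by ring,
      tele m ((n : ℝ) + 1) (by linarith)] at key
    have key2 : (h (x + n + 1) - h ((n : ℝ) + 1)) ≤
        x / m * ((∑ j ∈ Finset.range m, Real.log (g ((n : ℝ) + 1 + j)) + h ((n : ℝ) + 1)) - h ((n : ℝ) + 1)) := by
      rw [div_mul_eq_mul_div, le_div_iff₀ hm0]
      have := (div_le_div_iff₀ hx hm0).1 key
      linarith [this]
    calc h (x + n + 1) - h ((n : ℝ) + 1) ≤ _ := key2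
      _ = (x / m) * ∑ j ∈ Finset.range m, Real.log (g ((n : ℝ) + 1 + j)) := by ring
  -- the lower bound tends to 0
  have hLtend : Tendsto (fun n : ℕ => x * Real.log (g n) -
      (x / m) * ∑ j ∈ Finset.range m, Real.log (g ((n : ℝ) + 1 + j))) atTop (nhds 0) := by
    have hsum : Tendsto (fun n : ℕ => ∑ j ∈ Finset.range m,
        (Real.log (g n) - Real.log (g ((n : ℝ) + 1 + j)))) atTop (nhds 0) := by
      have := tendsto_finset_sum (Finset.range m)
        (fun j _ => ((hshift (j + 1)).neg.congr (fun n => by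
          push_cast
          rw [show (n : ℝ) + ((j : ℝ) + 1) = (n : ℝ) + 1 + j by ring]
          try ring)))
      simpa using this
    have hmul := hsum.const_mul (x / m)
    rw [mul_zero] at hmul
    refine hmul.congr fun n => ?_
    have hmne : (m : ℝ) ≠ 0 := ne_of_gt hm0
    rw [Finset.sum_sub_distrib, Finset.sum_const, Finset.card_range, nsmul_eq_mul, mul_sub]
    congr 1
    field_simp
  -- squeeze on log S
  have hlogStend : Tendsto (fun n : ℕ => Real.log (S n)) atTop (nhds 0) := by
    refine tendsto_of_tendsto_of_tendsto_of_le_of_le' hLtend tendsto_const_nhds ?_ ?_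
    · filter_upwards [eventually_ge_atTop N] with n hn
      rw [hlogS n (le_trans hN1 hn)]
      linarith [hup n hn]
    · filter_upwards [eventually_ge_atTop N] with n hn
      rw [hlogS n (le_trans hN1 hn)]
      linarith [hlow n hn]
  have hStend : Tendsto S atTop (nhds 1) := by
    have hc := (Real.continuous_exp.tendsto 0).comp hlogStend
    rw [Real.exp_zero] at hc
    refine hc.congr' ?_
    filter_upwards [eventually_ge_atTop 1] with n hn
    exact Real.exp_log (hSpos n hn)
  have hfinal := hStend.const_mul (f x / f 1)
  rw [mul_one] at hfinal
  simp only [Real.one_rpow, one_mul]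
  exact hfinal.congr fun n => (heq n).symm
end

section
/- Let g : ℝ⁺ → ℝ⁺ satisfy g(n+1)/g(n) → l as n → ∞ with l ≥ 1, and let f : ℝ⁺ → ℝ⁺ be eventually log-concave with f(x+1) = g(x) f(x) for all x > 0. Then f(x)/f(1) = l^{(x²+x)/2} · lim_{n→∞} [g(n)⋯g(1) g(n)^x] / [g(n+x)⋯g(x)] for all x > 0. -/
open Filter Finset Real

lemma wgl_prod (g f : ℝ → ℝ) (hfe : ∀ x > 0, f (x + 1) = g x * f x) :
    ∀ x : ℝ, 0 < x → ∀ n : ℕ, f (x + n) = f x * ∏ k ∈ Finset.range n, g (x + k) := by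
  intro x hx n
  induction n with
  | zero => simp
  | succ n ih =>
      have hxn : (0:ℝ) < x + n := by positivity
      have h1 : (x + ((n:ℕ)+1 : ℕ) : ℝ) = (x + n) + 1 := by push_cast; ring
      rw [h1, hfe _ hxn, ih, Finset.prod_range_succ]; ring

lemma wgl_int (g f : ℝ → ℝ) (hfe : ∀ x > 0, f (x + 1) = g x * f x) :
    ∀ n : ℕ, f ((n:ℝ) + 1) = f 1 * ∏ k ∈ Finset.Icc 1 n, g k := by
  intro n
  induction n with
  | zero => simp
  | succ n ih =>
      have hn : (0:ℝ) < (n:ℝ) + 1 := by positivity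
      have h1 : ((n+1 : ℕ) : ℝ) + 1 = ((n:ℝ) + 1) + 1 := by push_cast; ring
      rw [h1, hfe _ hn, ih, Finset.prod_Icc_succ_top (by omega : 1 ≤ n + 1)]
      push_cast; ring

theorem webster_generalized_logConcave (g f : ℝ → ℝ) (l : ℝ)
    (hg : ∀ x > 0, 0 < g x) (hf : ∀ x > 0, 0 < f x)
    (hl : 1 ≤ l)
    (hseq : Tendsto (fun n : ℕ => g ((n : ℝ) + 1) / g n) atTop (nhds l))
    (hconc : ∃ M : ℝ, ConcaveOn ℝ (Set.Ioi M) (fun x => Real.log (f x)))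
    (hfe : ∀ x > 0, f (x + 1) = g x * f x) :
    ∀ x > 0, Tendsto (fun n : ℕ => l ^ ((x ^ 2 + x) / 2) * gammaTypeSeq g x n)
      atTop (nhds (f x / f 1)) := by
  obtain ⟨M, hcon⟩ := hconc
  set h : ℝ → ℝ := fun t => Real.log (f t) with hh
  have hlog : ∀ t : ℝ, 0 < t → h (t + 1) = Real.log (g t) + h t := by
    intro t ht
    simp only [hh]
    rw [hfe t ht, Real.log_mul (ne_of_gt (hg t ht)) (ne_of_gt (hf t ht))]
  have hstep : ∀ n : ℕ, M < n → 1 ≤ n → Real.log (g ((n:ℝ) + 1)) ≤ Real.log (g (n:ℝ)) := by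
    intro n hMn h1n
    have hn0 : (0:ℝ) < n := by exact_mod_cast h1n
    have hmem1 : (n:ℝ) ∈ Set.Ioi M := hMn
    have hmem2 : (n:ℝ) + 2 ∈ Set.Ioi M := Set.mem_Ioi.mpr (by linarith)
    have key := hcon.2 hmem1 hmem2 (by norm_num : (0:ℝ) ≤ 1/2) (by norm_num : (0:ℝ) ≤ 1/2)
      (by norm_num)
    have hpt : (1/2 : ℝ) • (n:ℝ) + (1/2 : ℝ) • ((n:ℝ) + 2) = (n:ℝ) + 1 := by
      simp only [smul_eq_mul]; ring
    rw [hpt] at key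
    simp only [smul_eq_mul] at key
    have e1 : h ((n:ℝ) + 1) = Real.log (g n) + h n := hlog n hn0
    have e2 : h ((n:ℝ) + 2) = Real.log (g ((n:ℝ)+1)) + h ((n:ℝ)+1) := by
      have := hlog ((n:ℝ)+1) (by linarith)
      rw [show (n:ℝ) + 1 + 1 = (n:ℝ) + 2 by ring] at this
      exact this
    linarith
  have hanti : ∀ a b : ℕ, M < a → 1 ≤ a → a ≤ b → Real.log (g (b:ℝ)) ≤ Real.log (g (a:ℝ)) := by
    intro a b hMa h1a hab
    induction b with
    | zero => omega
    | succ b ih =>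
        rcases Nat.lt_or_ge a (b+1) with hlt | hge
        · have hab' : a ≤ b := by omega
          have hMb : M < b := lt_of_lt_of_le hMa (by exact_mod_cast hab')
          have h1b : 1 ≤ b := le_trans h1a hab'
          have hst := hstep b hMb h1b
          have hc : ((b+1 : ℕ) : ℝ) = (b:ℝ) + 1 := by push_cast; ring
          rw [hc]
          exact le_trans hst (ih hab')
        · have : a = b + 1 := by omega
          rw [this]
  have hl1 : l = 1 := by
    refine le_antisymm ?_ hl
    refine le_of_tendsto hseq ?_
    filter_upwards [eventually_gt_atTop (⌈M⌉₊ + 1)] with n hn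
    have h1n : 1 ≤ n := by omega
    have hMn : M < n := by
      calc M ≤ (⌈M⌉₊ : ℝ) := Nat.le_ceil M
        _ < (n : ℝ) := by exact_mod_cast Nat.lt_of_succ_lt hn
    have hn0 : (0:ℝ) < n := by exact_mod_cast h1n
    have hst := hstep n hMn h1n
    rw [Real.log_le_log_iff (hg _ (by linarith)) (hg _ hn0)] at hst
    exact div_le_one_of_le₀ hst (le_of_lt (hg _ hn0))
  intro x hx
  set m : ℕ := ⌈x⌉₊ with hm
  have hm1 : 1 ≤ m := Nat.one_le_ceil_iff.mpr hx
  have hxm : x ≤ m := Nat.le_ceil x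
  have hm0 : (0:ℝ) < m := by exact_mod_cast hm1
  set E : ℕ → ℝ := fun n => h (x + n + 1) - h ((n:ℝ) + 1) - x * Real.log (g n) with hE
  have hub : ∀ n : ℕ, M < n → 1 ≤ n → E n ≤ 0 := by
    intro n hMn h1n
    have hn0 : (0:ℝ) < n := by exact_mod_cast h1n
    have h1x : (0:ℝ) < 1 + x := by linarith
    have hmem1 : (n:ℝ) ∈ Set.Ioi M := hMn
    have hmem2 : (n:ℝ) + 1 + x ∈ Set.Ioi M := Set.mem_Ioi.mpr (by linarith)
    have key := hcon.2 hmem1 hmem2 (by positivity : (0:ℝ) ≤ x/(1+x))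
      (by positivity : (0:ℝ) ≤ 1/(1+x))
      (by rw [← add_div, add_comm x 1, div_self (ne_of_gt h1x)])
    have hpt : (x/(1+x)) • (n:ℝ) + (1/(1+x)) • ((n:ℝ) + 1 + x) = (n:ℝ) + 1 := by
      simp only [smul_eq_mul]; field_simp; ring
    rw [hpt] at key
    simp only [smul_eq_mul] at key
    have key' : x * h n + h ((n:ℝ) + 1 + x) ≤ (1+x) * h ((n:ℝ)+1) := by
      rw [div_mul_eq_mul_div, div_mul_eq_mul_div, ← add_div, div_le_iff₀ h1x] at key
      linarith
    have e1 : h ((n:ℝ) + 1) = Real.log (g n) + h n := hlog n hn0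
    have e1' : x * Real.log (g (n:ℝ)) = x * h ((n:ℝ)+1) - x * h (n:ℝ) := by rw [e1]; ring
    have harg : x + (n:ℝ) + 1 = (n:ℝ) + 1 + x := by ring
    simp only [hE, harg]
    nlinarith [key', e1']
  have hlb : ∀ n : ℕ, M < n → 1 ≤ n →
      x * (Real.log (g ((n+m : ℕ):ℝ)) - Real.log (g (n:ℝ))) ≤ E n := by
    intro n hMn h1n
    have hn0 : (0:ℝ) < n := by exact_mod_cast h1n
    set t : ℝ := x / m with ht
    have ht0 : 0 ≤ t := by positivity
    have htm : t * m = x := by rw [ht, div_mul_cancel₀ _ (ne_of_gt hm0)]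
    have ht1 : t ≤ 1 := by rw [ht, div_le_one hm0]; exact hxm
    have hmem1 : (n:ℝ) + 1 ∈ Set.Ioi M := Set.mem_Ioi.mpr (by linarith)
    have hmem2 : (n:ℝ) + 1 + m ∈ Set.Ioi M := Set.mem_Ioi.mpr (by linarith)
    have key := hcon.2 hmem1 hmem2 (by linarith : (0:ℝ) ≤ 1 - t) ht0 (by ring)
    have hpt : (1 - t) • ((n:ℝ) + 1) + t • ((n:ℝ) + 1 + m) = (n:ℝ) + 1 + x := by
      simp only [smul_eq_mul]; linear_combination htm
    rw [hpt] at key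
    simp only [smul_eq_mul] at key
    have hprod := wgl_prod g f hfe ((n:ℝ)+1) (by linarith) m
    have hsumeq : h ((n:ℝ) + 1 + m) =
        h ((n:ℝ)+1) + ∑ j ∈ Finset.range m, Real.log (g ((n:ℝ)+1+j)) := by
      simp only [hh]
      rw [hprod, Real.log_mul (ne_of_gt (hf _ (by linarith)))
        (ne_of_gt (Finset.prod_pos fun j _ => hg _ (by positivity))), Real.log_prod]
      intro j _
      exact ne_of_gt (hg _ (by positivity))
    have hterm : ∀ j ∈ Finset.range m,
        Real.log (g ((n+m : ℕ):ℝ)) ≤ Real.log (g ((n:ℝ)+1+j)) := by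
      intro j hj
      rw [Finset.mem_range] at hj
      have hc : (n:ℝ) + 1 + j = ((n+1+j : ℕ) : ℝ) := by push_cast; ring
      rw [hc]
      have hM' : M < ((n+1+j : ℕ) : ℝ) := by
        have : (n:ℝ) ≤ ((n+1+j : ℕ) : ℝ) := by exact_mod_cast (by omega : n ≤ n+1+j)
        linarith
      exact hanti (n+1+j) (n+m) hM' (by omega) (by omega)
    have hsumge : (m:ℝ) * Real.log (g ((n+m : ℕ):ℝ)) ≤
        ∑ j ∈ Finset.range m, Real.log (g ((n:ℝ)+1+j)) := by
      have := Finset.card_nsmul_le_sum (Finset.range m)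
        (fun j => Real.log (g ((n:ℝ)+1+j))) (Real.log (g ((n+m : ℕ):ℝ))) hterm
      simpa [nsmul_eq_mul] using this
    have e1 : h ((n:ℝ) + 1) = Real.log (g n) + h n := hlog n hn0
    have harg : x + (n:ℝ) + 1 = (n:ℝ) + 1 + x := by ring
    simp only [hE, harg]
    have step1 : t * ((m:ℝ) * Real.log (g ((n+m : ℕ):ℝ))) ≤
        t * (h ((n:ℝ)+1+m) - h ((n:ℝ)+1)) := by
      apply mul_le_mul_of_nonneg_left _ ht0
      rw [hsumeq]; linarith
    have step2 : t * (h ((n:ℝ)+1+m) - h ((n:ℝ)+1)) ≤ h ((n:ℝ)+1+x) - h ((n:ℝ)+1) := by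
      nlinarith [key]
    have step3 : t * ((m:ℝ) * Real.log (g ((n+m : ℕ):ℝ))) =
        x * Real.log (g ((n+m : ℕ):ℝ)) := by
      rw [← mul_assoc, htm]
    linarith
  have hdiff : Tendsto (fun n : ℕ => Real.log (g ((n:ℝ)+1)) - Real.log (g (n:ℝ)))
      atTop (nhds 0) := by
    have h01 : Tendsto (fun n : ℕ => g ((n:ℝ)+1) / g (n:ℝ)) atTop (nhds 1) := hl1 ▸ hseq
    have hcont := (Real.continuousAt_log one_ne_zero).tendsto.comp h01
    rw [Real.log_one] at hcont
    refine hcont.congr' ?_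
    filter_upwards [eventually_ge_atTop 1] with n hn
    have hn0 : (0:ℝ) < n := by exact_mod_cast hn
    simp only [Function.comp]
    exact Real.log_div (ne_of_gt (hg ((n:ℝ)+1) (by positivity))) (ne_of_gt (hg _ hn0))
  have hshift : ∀ k : ℕ, Tendsto (fun n : ℕ => Real.log (g ((n+k : ℕ):ℝ)) - Real.log (g (n:ℝ)))
      atTop (nhds 0) := by
    intro k
    induction k with
    | zero => simp [tendsto_const_nhds]
    | succ k ih =>
        have h1 := hdiff.comp (tendsto_add_atTop_nat k)
        have h2 := h1.add ih
        rw [add_zero] at h2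
        refine h2.congr (fun n => ?_)
        simp only [Function.comp]
        push_cast
        ring
  have hlow : Tendsto (fun n : ℕ => x * (Real.log (g ((n+m : ℕ):ℝ)) - Real.log (g (n:ℝ))))
      atTop (nhds 0) := by
    simpa using (hshift m).const_mul x
  have hElim : Tendsto E atTop (nhds 0) := by
    refine tendsto_of_tendsto_of_tendsto_of_le_of_le' hlow tendsto_const_nhds ?_ ?_
    · filter_upwards [eventually_gt_atTop (⌈M⌉₊ + 1)] with n hn
      have h1n : 1 ≤ n := by omega
      have hMn : M < n := by
        calc M ≤ (⌈M⌉₊ : ℝ) := Nat.le_ceil M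
          _ < (n : ℝ) := by exact_mod_cast Nat.lt_of_succ_lt hn
      exact hlb n hMn h1n
    · filter_upwards [eventually_gt_atTop (⌈M⌉₊ + 1)] with n hn
      have h1n : 1 ≤ n := by omega
      have hMn : M < n := by
        calc M ≤ (⌈M⌉₊ : ℝ) := Nat.le_ceil M
          _ < (n : ℝ) := by exact_mod_cast Nat.lt_of_succ_lt hn
      exact hub n hMn h1n
  have hid : ∀ᶠ n in atTop, l ^ ((x^2+x)/2) * gammaTypeSeq g x n
      = (f x / f 1) * Real.exp (-(E n)) := by
    filter_upwards [eventually_ge_atTop 1] with n hn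
    have hn0 : (0:ℝ) < n := by exact_mod_cast hn
    rw [hl1, Real.one_rpow, one_mul]
    have hfx : 0 < f x := hf x hx
    have hf1 : 0 < f 1 := hf 1 one_pos
    have hfn1 : 0 < f ((n:ℝ)+1) := hf _ (by linarith)
    have hfxn : 0 < f (x+(n:ℝ)+1) := hf _ (by linarith)
    have hgn : 0 < g (n:ℝ) := hg _ hn0
    have hIcc : (∏ k ∈ Finset.Icc 1 n, g (k:ℝ)) = f ((n:ℝ)+1) / f 1 := by
      rw [wgl_int g f hfe n]; field_simp
    have hrange : (∏ k ∈ Finset.range (n+1), g (x+(k:ℝ))) = f (x+(n:ℝ)+1) / f x := by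
      have hp := wgl_prod g f hfe x hx (n+1)
      rw [show x + ((n+1:ℕ):ℝ) = x + (n:ℝ) + 1 by push_cast; ring] at hp
      rw [hp]; field_simp
    have hexp : Real.exp (-(E n)) = f ((n:ℝ)+1) * g (n:ℝ) ^ x / f (x+(n:ℝ)+1) := by
      simp only [hE, hh]
      rw [show -(Real.log (f (x+(n:ℝ)+1)) - Real.log (f ((n:ℝ)+1)) - x * Real.log (g (n:ℝ)))
        = (Real.log (f ((n:ℝ)+1)) + x * Real.log (g (n:ℝ))) - Real.log (f (x+(n:ℝ)+1)) by ring]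
      rw [Real.exp_sub, Real.exp_add, Real.exp_log hfn1, Real.exp_log hfxn,
        Real.rpow_def_of_pos hgn, mul_comm x (Real.log (g (n:ℝ)))]
    rw [gammaTypeSeq, hIcc, hrange, hexp]
    field_simp
  have hend : Tendsto (fun n : ℕ => (f x / f 1) * Real.exp (-(E n))) atTop (nhds (f x / f 1)) := by
    have he : Tendsto (fun n : ℕ => Real.exp (-(E n))) atTop (nhds 1) := by
      have := (Real.continuous_exp.tendsto (-(0:ℝ))).comp hElim.neg
      simpa [Function.comp_def] using this
    simpa using he.const_mul (f x / f 1)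
  exact Tendsto.congr' (hid.mono fun n hn => hn.symm) hend
end

section
/- Let g : ℝ⁺ → ℝ⁺ satisfy lim_{x→∞} g(x+w)/g(x) = 1 for all w > 0. Suppose f : ℝ⁺ → ℝ⁺ satisfies f(x+1) = g(x) f(x) for x > 0, f(1) = 1, and f is eventually log-convex of order two (i.e., log f is 2-convex on some interval (M,∞)). Then f(x) = lim_{n→∞} [g(n)⋯g(1) g(n)^x] / [g(n+x)⋯g(x)] for all x > 0; in particular f is uniquely determined. -/
open Filter Finset Real

/-- Divided difference of `h` at the points `x 0, …, x (m-1)` (assumed pairwise distinct),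
via the Lagrange formula. -/
noncomputable def divDiff (h : ℝ → ℝ) {m : ℕ} (x : Fin m → ℝ) : ℝ :=
  ∑ i, h (x i) / ∏ j ∈ Finset.univ.erase i, (x i - x j)

/-- `h` is convex of order `n` on `I` : all divided differences at `n+2` increasing
points of `I` are nonnegative. -/
def NConvexOn (n : ℕ) (I : Set ℝ) (h : ℝ → ℝ) : Prop :=
  ∀ x : Fin (n + 2) → ℝ, StrictMono x → (∀ i, x i ∈ I) → 0 ≤ divDiff h x

/-- `h` is concave of order `n` on `I` if `-h` is convex of order `n` on `I`. -/
def NConcaveOn (n : ℕ) (I : Set ℝ) (h : ℝ → ℝ) : Prop :=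
  NConvexOn n I (fun t => -h t)

lemma divDiff_four (h : ℝ → ℝ) (a b c d : ℝ) :
    divDiff h ![a,b,c,d] = h a / ((a-b)*((a-c)*(a-d))) + (h b / ((b-a)*((b-c)*(b-d))) +
      (h c / ((c-a)*((c-b)*(c-d))) + h d / ((d-a)*((d-b)*(d-c))))) := by
  have e0 : (Finset.univ.erase (0:Fin 4)) = {1,2,3} := by decide
  have e1 : (Finset.univ.erase (1:Fin 4)) = {0,2,3} := by decide
  have e2 : (Finset.univ.erase (2:Fin 4)) = {0,1,3} := by decide
  have e3 : (Finset.univ.erase (3:Fin 4)) = {0,1,2} := by decide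
  simp [divDiff, Fin.sum_univ_four, e0, e1, e2, e3, Finset.prod_insert, Finset.mem_insert]
  ring

lemma strictMono_vec4 {a b c d : ℝ} (h1 : a < b) (h2 : b < c) (h3 : c < d) :
    StrictMono ![a,b,c,d] := by
  intro i j hij
  fin_cases i <;> fin_cases j <;> simp_all <;> linarith

lemma key_upper (F : ℝ → ℝ) (y x : ℝ) (hx0 : 0 < x) (hx1 : x < 1)
    (h : 0 ≤ divDiff F ![y-1, y, y+x, y+1]) :
    F (y+x) - F y - x * (F (y+1) - F y) ≤ x*(1-x)/2 * ((F y - F (y-1)) - (F (y+1) - F y)) := by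
  rw [divDiff_four] at h
  rw [show (y-1-y)*(((y-1)-(y+x))*((y-1)-(y+1))) = -(2*(1+x)) from by ring,
      show (y-(y-1))*((y-(y+x))*(y-(y+1))) = x from by ring,
      show ((y+x)-(y-1))*(((y+x)-y)*((y+x)-(y+1))) = -((1+x)*(x*(1-x))) from by ring,
      show ((y+1)-(y-1))*(((y+1)-y)*((y+1)-(y+x))) = 2*(1-x) from by ring] at h
  set A := F (y-1); set B := F y; set C := F (y+x); set D := F (y+1)
  have n1 : x ≠ 0 := ne_of_gt hx0
  have n2 : (1:ℝ) - x ≠ 0 := by linarith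
  have n3 : (1:ℝ) + x ≠ 0 := by positivity
  have key : 2*x*(1-x)*(1+x) * (A / -(2*(1+x)) + (B / x + (C / -((1+x)*(x*(1-x))) + D / (2*(1-x))))) = -(x*(1-x))*A + 2*(1-x^2)*B - 2*C + x*(1+x)*D := by
    field_simp
    ring
  have hpos : (0:ℝ) < 2*x*(1-x)*(1+x) :=
    mul_pos (mul_pos (mul_pos two_pos hx0) (by linarith)) (by linarith)
  have h2 : 0 ≤ -(x*(1-x))*A + 2*(1-x^2)*B - 2*C + x*(1+x)*D := by
    rw [← key]; exact mul_nonneg hpos.le h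
  have hid : x*(1-x)/2 * ((B - A) - (D - B)) - (C - B - x * (D - B)) = (-(x*(1-x))*A + 2*(1-x^2)*B - 2*C + x*(1+x)*D)/2 := by ring
  linarith

lemma key_lower (F : ℝ → ℝ) (y x : ℝ) (hx0 : 0 < x) (hx1 : x < 1)
    (h : 0 ≤ divDiff F ![y, y+x, y+1, y+2]) :
    x*(1-x)/2 * ((F (y+1) - F y) - (F (y+2) - F (y+1))) ≤ F (y+x) - F y - x * (F (y+1) - F y) := by
  rw [divDiff_four] at h
  rw [show (y-(y+x))*((y-(y+1))*(y-(y+2))) = -(2*x) from by ring,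
      show ((y+x)-y)*(((y+x)-(y+1))*((y+x)-(y+2))) = x*((1-x)*(2-x)) from by ring,
      show ((y+1)-y)*(((y+1)-(y+x))*((y+1)-(y+2))) = x-1 from by ring,
      show ((y+2)-y)*(((y+2)-(y+x))*((y+2)-(y+1))) = 2*(2-x) from by ring] at h
  set A := F y; set B := F (y+x); set C := F (y+1); set D := F (y+2)
  have n1 : x ≠ 0 := ne_of_gt hx0
  have n2 : (1:ℝ) - x ≠ 0 := by linarith
  have n3 : (2:ℝ) - x ≠ 0 := by linarith
  have n4 : x - 1 ≠ 0 := sub_ne_zero.mpr (ne_of_lt hx1)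
  have key : 2*x*(1-x)*(2-x) * (A / -(2*x) + (B / (x*((1-x)*(2-x))) + (C / (x-1) + D / (2*(2-x))))) = -((1-x)*(2-x))*A + 2*B - 2*(x*(2-x))*C + x*(1-x)*D := by
    field_simp
    ring
  have hpos : (0:ℝ) < 2*x*(1-x)*(2-x) :=
    mul_pos (mul_pos (mul_pos two_pos hx0) (by linarith)) (by linarith)
  have h2 : 0 ≤ -((1-x)*(2-x))*A + 2*B - 2*(x*(2-x))*C + x*(1-x)*D := by
    rw [← key]; exact mul_nonneg hpos.le h
  have hid : (B - A - x * (C - A)) - x*(1-x)/2 * ((C - A) - (D - C)) = (-((1-x)*(2-x))*A + 2*B - 2*(x*(2-x))*C + x*(1-x)*D)/2 := by ring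
  linarith

theorem uniqueness_of_second_order_logConvex_solution (g f : ℝ → ℝ)
    (hg : ∀ x > 0, 0 < g x) (hf : ∀ x > 0, 0 < f x)
    (hasym : ∀ w > 0, Tendsto (fun x : ℝ => g (x + w) / g x) atTop (nhds 1))
    (hconv2 : ∃ M : ℝ, NConvexOn 2 (Set.Ioi M) (fun x => Real.log (f x)))
    (hfe : ∀ x > 0, f (x + 1) = g x * f x)
    (hf1 : f 1 = 1) :
    ∀ x > 0, Tendsto (gammaTypeSeq g x) atTop (nhds (f x)) := by
  obtain ⟨M, hM⟩ := hconv2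
  set F : ℝ → ℝ := fun x => Real.log (f x) with hFdef
  set G : ℝ → ℝ := fun x => Real.log (g x) with hGdef
  have hFe : ∀ y > (0:ℝ), F (y+1) = G y + F y := by
    intro y hy
    simp only [hFdef, hGdef, hfe y hy]
    exact Real.log_mul (ne_of_gt (hg y hy)) (ne_of_gt (hf y hy))
  have hF1 : F 1 = 0 := by simp [hFdef, hf1]
  -- limit of G differences along naturals
  have hGdiff : ∀ w > (0:ℝ), Tendsto (fun n : ℕ => G (w + n) - G n) atTop (nhds 0) := by
    intro w hw
    have h1 : Tendsto (fun n : ℕ => g (↑n + w) / g ↑n) atTop (nhds 1) :=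
      (hasym w hw).comp tendsto_natCast_atTop_atTop
    have h2 : Tendsto (fun n : ℕ => Real.log (g (↑n + w) / g ↑n)) atTop (nhds 0) := by
      have := (Real.continuousAt_log one_ne_zero).tendsto.comp h1
      simpa [Function.comp_def] using this
    apply h2.congr'
    filter_upwards [eventually_gt_atTop 0] with n hn
    have hn' : (0:ℝ) < n := by exact_mod_cast hn
    rw [Real.log_div (ne_of_gt (hg _ (by linarith))) (ne_of_gt (hg _ hn'))]
    rw [add_comm (n:ℝ) w]
  have hGdiff1 : Tendsto (fun n : ℕ => G ((n:ℝ) - 1) - G n) atTop (nhds 0) := by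
    rw [← tendsto_add_atTop_iff_nat 1]
    have h := (hGdiff 1 one_pos).neg
    rw [neg_zero] at h
    apply h.congr
    intro n
    push_cast
    ring_nf
  -- the core limit
  have hA : ∀ x : ℝ, 0 < x → Tendsto (fun n : ℕ => F (x + n) - F n - x * G n) atTop (nhds 0) := by
    have base : ∀ x : ℝ, 0 < x → x < 1 → Tendsto (fun n : ℕ => F (x + n) - F n - x * G n) atTop (nhds 0) := by
      intro x hx0 hx1
      have hu : Tendsto (fun n : ℕ => x*(1-x)/2 * (G ((n:ℝ) - 1) - G n)) atTop (nhds 0) := by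
        have := hGdiff1.const_mul (x*(1-x)/2)
        simpa using this
      have hl : Tendsto (fun n : ℕ => x*(1-x)/2 * (G (n:ℝ) - G (1 + n))) atTop (nhds 0) := by
        have h := ((hGdiff 1 one_pos).neg).const_mul (x*(1-x)/2)
        rw [neg_zero, mul_zero] at h
        apply h.congr
        intro n; ring
      refine tendsto_of_tendsto_of_tendsto_of_le_of_le' hl hu ?_ ?_
      · filter_upwards [tendsto_natCast_atTop_atTop.eventually_gt_atTop (max M 0 + 2)] with n hn
        set y := (n:ℝ) with hy
        have hy2 : 2 < y := lt_of_le_of_lt (by simp [le_max_right]) hn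
        have hyM : M + 2 < y := lt_of_le_of_lt (by simp [le_max_left, add_le_add_iff_right]) hn
        have h2 : 0 ≤ divDiff F ![y, y+x, y+1, y+2] := by
          apply hM
          · exact strictMono_vec4 (by linarith) (by linarith) (by linarith)
          · intro i; fin_cases i <;> simp [Set.mem_Ioi] <;> linarith
        have kl := key_lower F y x hx0 hx1 h2
        have e1 : F (y+1) - F y = G y := by rw [hFe y (by linarith)]; ring
        have e3 : F (y+2) - F (y+1) = G (y+1) := by
          have := hFe (y+1) (by linarith)
          rw [show y+1+1 = y+2 from by ring] at this
          linarith
        have e1' : x * (F (y+1) - F y) = x * G y := by rw [e1]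
        have eR : x*(1-x)/2 * ((F (y+1) - F y) - (F (y+2) - F (y+1))) = x*(1-x)/2 * (G y - G (y+1)) := by rw [e1, e3]
        have hcomm : x + y = y + x := add_comm x y
        have hcomm2 : (1:ℝ) + y = y + 1 := add_comm 1 y
        rw [hcomm, hcomm2]
        linarith
      · filter_upwards [tendsto_natCast_atTop_atTop.eventually_gt_atTop (max M 0 + 2)] with n hn
        set y := (n:ℝ) with hy
        have hy2 : 2 < y := lt_of_le_of_lt (by simp [le_max_right]) hn
        have hyM : M + 2 < y := lt_of_le_of_lt (by simp [le_max_left, add_le_add_iff_right]) hn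
        have h1 : 0 ≤ divDiff F ![y-1, y, y+x, y+1] := by
          apply hM
          · exact strictMono_vec4 (by linarith) (by linarith) (by linarith)
          · intro i; fin_cases i <;> simp [Set.mem_Ioi] <;> linarith
        have ku := key_upper F y x hx0 hx1 h1
        have e1 : F (y+1) - F y = G y := by rw [hFe y (by linarith)]; ring
        have e2 : F y - F (y-1) = G (y-1) := by
          have := hFe (y-1) (by linarith)
          rw [show y-1+1 = y from by ring] at this
          linarith
        have e1' : x * (F (y+1) - F y) = x * G y := by rw [e1]
        have eR : x*(1-x)/2 * ((F y - F (y-1)) - (F (y+1) - F y)) = x*(1-x)/2 * (G (y-1) - G y) := by rw [e1, e2]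
        have hcomm : x + y = y + x := add_comm x y
        rw [hcomm]
        linarith
    have key : ∀ m : ℕ, ∀ x : ℝ, 0 < x → x ≤ m + 1 → Tendsto (fun n : ℕ => F (x + n) - F n - x * G n) atTop (nhds 0) := by
      intro m
      induction m with
      | zero =>
        intro x hx0 hx1
        have hx1' : x ≤ 1 := by push_cast at hx1; linarith
        rcases eq_or_lt_of_le hx1' with heq | hlt
        · subst heq
          apply Tendsto.congr' _ tendsto_const_nhds
          filter_upwards [eventually_gt_atTop 0] with n hn
          have hn' : (0:ℝ) < n := by exact_mod_cast hn
          have h1 := hFe n hn'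
          rw [add_comm (1:ℝ) (n:ℝ), h1]; ring
        · exact base x hx0 hlt
      | succ m ih =>
        intro x hx0 hx1
        rcases le_or_gt x (m+1) with hle | hgt
        · exact ih x hx0 hle
        · have hx1' : (0:ℝ) < x - 1 := by
            have hm : (0:ℝ) ≤ (m:ℝ) := Nat.cast_nonneg m
            linarith
          have hIH := ih (x-1) hx1' (by push_cast at hx1 ⊢; linarith)
          have hG := hGdiff (x-1) hx1'
          have := hIH.add hG
          rw [add_zero] at this
          apply this.congr
          intro n
          have hpos : (0:ℝ) < (x-1) + n := by positivity
          have := hFe ((x-1) + n) hpos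
          rw [show (x-1) + (n:ℝ) + 1 = x + n from by ring] at this
          rw [this]; ring
    intro x hx
    refine key ⌈x⌉₊ x hx ?_
    calc x ≤ ⌈x⌉₊ := Nat.le_ceil x
    _ ≤ (⌈x⌉₊:ℝ) + 1 := by linarith
  -- now the final assembly
  intro x hx
  have hsum1 : ∀ n : ℕ, ∑ k ∈ Finset.Icc 1 n, G k = F (n + 1) := by
    intro n
    induction n with
    | zero => simpa using hF1.symm
    | succ n ih =>
      rw [Finset.sum_Icc_succ_top (by omega : 1 ≤ n + 1), ih]
      have := hFe ((n:ℝ) + 1) (by positivity)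
      push_cast
      rw [this]; ring
  have hsum2 : ∀ n : ℕ, ∑ k ∈ Finset.range (n+1), G (x + k) = F (x + n + 1) - F x := by
    intro n
    induction n with
    | zero =>
      rw [Finset.sum_range_succ, Finset.sum_range_zero]
      push_cast
      rw [add_zero, zero_add, hFe x hx]
      ring
    | succ n ih =>
      rw [Finset.sum_range_succ, ih]
      have := hFe (x + (n+1)) (by positivity)
      push_cast
      push_cast at this
      rw [show x + ((n:ℝ)+1) + 1 = x + (n+1) + 1 from by ring] at this
      rw [this]; ring
  -- limit of the exponent
  have hT : Tendsto (fun n : ℕ => F ((n:ℝ)+1) + x * G n - (F (x + n + 1) - F x)) atTop (nhds (F x)) := by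
    have hA1 : Tendsto (fun n : ℕ => F (x + ((n:ℕ)+1:ℕ)) - F (((n:ℕ)+1:ℕ)) - x * G (((n:ℕ)+1:ℕ))) atTop (nhds 0) :=
      (hA x hx).comp (tendsto_add_atTop_nat 1)
    have hG1 := (hGdiff 1 one_pos).const_mul x
    rw [mul_zero] at hG1
    have hcomb := hA1.add hG1
    rw [add_zero] at hcomb
    have hsub := hcomb.const_sub (F x)
    rw [sub_zero] at hsub
    apply hsub.congr
    intro n
    push_cast
    ring_nf
  have hS : Tendsto (fun n : ℕ => (∑ k ∈ Finset.Icc 1 n, G k) + x * G n - ∑ k ∈ Finset.range (n+1), G (x + k)) atTop (nhds (F x)) := by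
    apply hT.congr
    intro n
    rw [hsum1 n, hsum2 n]
  have hexp := (Real.continuous_exp.tendsto (F x)).comp hS
  have hfx : Real.exp (F x) = f x := Real.exp_log (hf x hx)
  rw [hfx] at hexp
  apply hexp.congr'
  filter_upwards [eventually_ge_atTop 1] with n hn
  have hnpos : (0:ℝ) < n := by exact_mod_cast hn
  have hnum1 : ∏ k ∈ Finset.Icc 1 n, g k = Real.exp (∑ k ∈ Finset.Icc 1 n, G k) := by
    rw [Real.exp_sum]
    apply Finset.prod_congr rfl
    intro k hk
    have hk1 : 1 ≤ k := (Finset.mem_Icc.mp hk).1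
    have hkpos : (0:ℝ) < k := by exact_mod_cast Nat.lt_of_lt_of_le Nat.zero_lt_one hk1
    exact (Real.exp_log (hg k hkpos)).symm
  have hnum2 : g (n:ℝ) ^ x = Real.exp (x * G n) := by
    rw [Real.rpow_def_of_pos (hg _ hnpos), mul_comm]
  have hden : ∏ k ∈ Finset.range (n+1), g (x + k) = Real.exp (∑ k ∈ Finset.range (n+1), G (x + k)) := by
    rw [Real.exp_sum]
    apply Finset.prod_congr rfl
    intro k _
    have hkpos : (0:ℝ) < x + k := by positivity
    exact (Real.exp_log (hg _ hkpos)).symm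
  simp only [Function.comp_apply]
  rw [gammaTypeSeq, hnum1, hnum2, hden, ← Real.exp_add, ← Real.exp_sub]
end

section
/- Let g : ℝ⁺ → ℝ⁺ satisfy lim_{x→∞} g(x+w)/g(x) = 1 for all w > 0. Suppose f : ℝ⁺ → ℝ⁺ satisfies f(x+1) = g(x) f(x) for x > 0, f(1) = 1, and f is eventually log-concave of order two (log f is 2-concave on some (M,∞)). Then f(x) = lim_{n→∞} [g(n)⋯g(1) g(n)^x] / [g(n+x)⋯g(x)] for all x > 0. -/
open Filter Finset Real

lemma divDiff3 (F : ℝ → ℝ) (a b c : ℝ) :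
    divDiff F ![a, b, c] = F a / ((a - b) * (a - c)) + F b / ((b - a) * (b - c))
      + F c / ((c - a) * (c - b)) := by
  have h0 : (Finset.univ.erase (0 : Fin 3)) = {1, 2} := by decide
  have h1 : (Finset.univ.erase (1 : Fin 3)) = {0, 2} := by decide
  have h2 : (Finset.univ.erase (2 : Fin 3)) = {0, 1} := by decide
  simp [divDiff, Fin.sum_univ_three, h0, h1, h2, Finset.prod_insert, Finset.prod_singleton]

lemma divDiff4 (F : ℝ → ℝ) (a b c d : ℝ) :
    divDiff F ![a, b, c, d] = F a / ((a - b) * ((a - c) * (a - d)))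
      + F b / ((b - a) * ((b - c) * (b - d)))
      + F c / ((c - a) * ((c - b) * (c - d)))
      + F d / ((d - a) * ((d - b) * (d - c))) := by
  have h0 : (Finset.univ.erase (0 : Fin 4)) = {1, 2, 3} := by decide
  have h1 : (Finset.univ.erase (1 : Fin 4)) = {0, 2, 3} := by decide
  have h2 : (Finset.univ.erase (2 : Fin 4)) = {0, 1, 3} := by decide
  have h3 : (Finset.univ.erase (3 : Fin 4)) = {0, 1, 2} := by decide
  simp [divDiff, Fin.sum_univ_four, h0, h1, h2, h3, Finset.prod_insert, Finset.prod_singleton]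

lemma dd_step (F : ℝ → ℝ) {a b c d : ℝ} (hab : a < b) (hbc : b < c) (hcd : c < d) :
    (d - a) * divDiff F ![a, b, c, d] = divDiff F ![b, c, d] - divDiff F ![a, b, c] := by
  have h1 : a - b ≠ 0 := by linarith
  have h2 : a - c ≠ 0 := by linarith
  have h3 : a - d ≠ 0 := by linarith
  have h4 : b - c ≠ 0 := by linarith
  have h5 : b - d ≠ 0 := by linarith
  have h6 : c - d ≠ 0 := by linarith
  have h1' : b - a ≠ 0 := by linarith
  have h2' : c - a ≠ 0 := by linarith
  have h3' : d - a ≠ 0 := by linarith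
  have h4' : c - b ≠ 0 := by linarith
  have h5' : d - b ≠ 0 := by linarith
  have h6' : d - c ≠ 0 := by linarith
  have hA : (d - a) * (F a / ((a - b) * ((a - c) * (a - d))))
      = -(F a / ((a - b) * (a - c))) := by
    field_simp
    ring
  have hB : (d - a) * (F b / ((b - a) * ((b - c) * (b - d))))
      = F b / ((b - c) * (b - d)) - F b / ((b - a) * (b - c)) := by
    field_simp
    ring
  have hC : (d - a) * (F c / ((c - a) * ((c - b) * (c - d))))
      = F c / ((c - b) * (c - d)) - F c / ((c - a) * (c - b)) := by
    field_simp
    ring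
  have hD : (d - a) * (F d / ((d - a) * ((d - b) * (d - c))))
      = F d / ((d - b) * (d - c)) := by
    field_simp
  rw [divDiff4, divDiff3, divDiff3, mul_add, mul_add, mul_add, hA, hB, hC, hD]
  ring

lemma newton3 (F : ℝ → ℝ) {a b c : ℝ} (hab : a < b) (hbc : b < c) :
    F b - F a = (b - a) * (F c - F a) / (c - a)
      + (b - a) * (b - c) * divDiff F ![a, b, c] := by
  have h1 : a - b ≠ 0 := by linarith
  have h2 : a - c ≠ 0 := by linarith
  have h4 : b - c ≠ 0 := by linarith
  have h1' : b - a ≠ 0 := by linarith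
  have h2' : c - a ≠ 0 := by linarith
  have h4' : c - b ≠ 0 := by linarith
  rw [divDiff3]
  field_simp
  ring

lemma divDiff_neg (F : ℝ → ℝ) {m : ℕ} (x : Fin m → ℝ) :
    divDiff (fun t => -F t) x = -divDiff F x := by
  simp [divDiff, neg_div, Finset.sum_neg_distrib]

lemma strictMono4 {a b c d : ℝ} (hab : a < b) (hbc : b < c) (hcd : c < d) :
    StrictMono (![a, b, c, d]) := by
  intro i j hij
  fin_cases i <;> fin_cases j <;> simp_all <;> linarith

lemma dd_mono {M : ℝ} {F : ℝ → ℝ} (h2 : NConcaveOn 2 (Set.Ioi M) F)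
    {a b c d : ℝ} (hab : a < b) (hbc : b < c) (hcd : c < d) (ha : M < a) :
    divDiff F ![b, c, d] ≤ divDiff F ![a, b, c] := by
  have hmem : ∀ i, (![a, b, c, d]) i ∈ Set.Ioi M := by
    intro i; fin_cases i <;> simp <;> linarith
  have h := h2 ![a, b, c, d] (strictMono4 hab hbc hcd) hmem
  rw [divDiff_neg] at h
  have h4 : divDiff F ![a, b, c, d] ≤ 0 := by linarith
  have hstep := dd_step F hab hbc hcd
  nlinarith [mul_nonpos_of_nonneg_of_nonpos (by linarith : (0:ℝ) ≤ d - a) h4]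

theorem uniqueness_of_second_order_logConcave_solution (g f : ℝ → ℝ)
    (hg : ∀ x > 0, 0 < g x) (hf : ∀ x > 0, 0 < f x)
    (hasym : ∀ w > 0, Tendsto (fun x : ℝ => g (x + w) / g x) atTop (nhds 1))
    (hconc2 : ∃ M : ℝ, NConcaveOn 2 (Set.Ioi M) (fun x => Real.log (f x)))
    (hfe : ∀ x > 0, f (x + 1) = g x * f x)
    (hf1 : f 1 = 1) :
    ∀ x > 0, Tendsto (gammaTypeSeq g x) atTop (nhds (f x)) := by
  obtain ⟨M, hM⟩ := hconc2
  set F : ℝ → ℝ := fun y => Real.log (f y) with hF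
  -- functional equation for F
  have hFstep : ∀ y > (0:ℝ), F (y + 1) = F y + Real.log (g y) := by
    intro y hy
    simp only [hF]
    rw [hfe y hy, Real.log_mul (ne_of_gt (hg y hy)) (ne_of_gt (hf y hy))]
    ring
  have hFsum : ∀ y > (0:ℝ), ∀ m : ℕ,
      F (y + m) = F y + ∑ j ∈ Finset.range m, Real.log (g (y + j)) := by
    intro y hy m
    induction m with
    | zero => simp
    | succ m ih =>
      have h1 : y + (m + 1 : ℕ) = (y + m) + 1 := by push_cast; ring
      rw [h1, hFstep (y + m) (by positivity), ih, Finset.sum_range_succ]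
      ring
  -- the basic asymptotic limit in log form
  have Lgw : ∀ w > (0:ℝ),
      Tendsto (fun y : ℝ => Real.log (g (y + w)) - Real.log (g y)) atTop (nhds 0) := by
    intro w hw
    have h1 := hasym w hw
    have h2 : Tendsto (fun y : ℝ => Real.log (g (y + w) / g y)) atTop (nhds 0) := by
      have h3 := (Real.continuousAt_log one_ne_zero).tendsto.comp h1
      simpa [Function.comp_def] using h3
    apply h2.congr'
    filter_upwards [eventually_gt_atTop (0:ℝ)] with y hy
    rw [Real.log_div (ne_of_gt (hg _ (by linarith))) (ne_of_gt (hg _ hy))]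
  have LgwN : ∀ w > (0:ℝ),
      Tendsto (fun n : ℕ => Real.log (g ((n:ℝ) + w)) - Real.log (g n)) atTop (nhds 0) :=
    fun w hw => (Lgw w hw).comp tendsto_natCast_atTop_atTop
  -- value of second divided difference at consecutive integer-like points
  have hcval : ∀ y : ℝ, 0 < y →
      divDiff F ![y, y + 1, y + 2] = (Real.log (g (y + 1)) - Real.log (g y)) / 2 := by
    intro y hy
    have e1 : F (y + 1) = F y + Real.log (g y) := hFstep y hy
    have e2 : F (y + 2) = F (y + 1) + Real.log (g (y + 1)) := by
      have := hFstep (y + 1) (by linarith)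
      rw [show y + 2 = y + 1 + 1 by ring, this]
    rw [divDiff3, e2, e1]
    have d1 : y - (y + 1) = -1 := by ring
    have d2 : y - (y + 2) = -2 := by ring
    have d3 : y + 1 - y = 1 := by ring
    have d4 : y + 1 - (y + 2) = -1 := by ring
    have d5 : y + 2 - y = 2 := by ring
    have d6 : y + 2 - (y + 1) = 1 := by ring
    rw [d1, d2, d3, d4, d5, d6]
    ring
  -- the core limit for t ∈ (0,1]
  have Ecore : ∀ t : ℝ, 0 < t → t ≤ 1 →
      Tendsto (fun n : ℕ => F ((n:ℝ) + 1 + t) - F ((n:ℝ) + 1) - t * Real.log (g n))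
        atTop (nhds 0) := by
    intro t ht0 ht1
    rcases eq_or_lt_of_le ht1 with h1 | h1
    · -- t = 1
      subst h1
      have heq : ∀ n : ℕ, F ((n:ℝ) + 1 + 1) - F ((n:ℝ) + 1) - 1 * Real.log (g n)
          = Real.log (g ((n:ℝ) + 1)) - Real.log (g n) := by
        intro n
        have := hFstep ((n:ℝ) + 1) (by positivity)
        rw [this]; ring
      exact ((LgwN 1 one_pos).congr (fun n => (heq n).symm))
    · -- 0 < t < 1 : sandwich the divided difference
      have Dlim : Tendsto
          (fun n : ℕ => divDiff F ![(n:ℝ) + 1, (n:ℝ) + 1 + t, (n:ℝ) + 2]) atTop (nhds 0) := by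
        have hHigh : Tendsto (fun n : ℕ =>
            divDiff F ![(n:ℝ) - 1, (n:ℝ), (n:ℝ) + 1]) atTop (nhds 0) := by
          have hcomp : Tendsto (fun n : ℕ => (n:ℝ) - 1) atTop atTop := by
            apply tendsto_atTop_add_const_right atTop (-1 : ℝ)
            exact tendsto_natCast_atTop_atTop
          have := ((Lgw 1 one_pos).comp hcomp).div_const 2
          simp only [Function.comp] at this
          apply Tendsto.congr' _ (by simpa using this)
          filter_upwards [eventually_gt_atTop 1] with n hn
          have hpos : (0:ℝ) < (n:ℝ) - 1 := by
            have : (1:ℝ) < (n:ℝ) := by exact_mod_cast hn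
            linarith
          have hv := hcval ((n:ℝ) - 1) hpos
          rw [show (n:ℝ) - 1 + 1 = (n:ℝ) by ring, show (n:ℝ) - 1 + 2 = (n:ℝ) + 1 by ring] at hv
          rw [hv]
        have hLow : Tendsto (fun n : ℕ =>
            divDiff F ![(n:ℝ) + 2, (n:ℝ) + 3, (n:ℝ) + 4]) atTop (nhds 0) := by
          have hcomp : Tendsto (fun n : ℕ => (n:ℝ) + 2) atTop atTop := by
            apply tendsto_atTop_add_const_right atTop (2 : ℝ)
            exact tendsto_natCast_atTop_atTop
          have := ((Lgw 1 one_pos).comp hcomp).div_const 2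
          simp only [Function.comp] at this
          apply Tendsto.congr' _ (by simpa using this)
          filter_upwards [eventually_gt_atTop 0] with n hn
          have hpos : (0:ℝ) < (n:ℝ) + 2 := by positivity
          have hv := hcval ((n:ℝ) + 2) hpos
          rw [show (n:ℝ) + 2 + 1 = (n:ℝ) + 3 by ring, show (n:ℝ) + 2 + 2 = (n:ℝ) + 4 by ring] at hv
          rw [hv, show (n:ℝ) + 2 + 1 = (n:ℝ) + 3 by ring]
      -- sandwich
        apply tendsto_of_tendsto_of_tendsto_of_le_of_le' hLow hHigh
        · -- lower bound eventually
          rw [eventually_atTop]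
          obtain ⟨N, hN⟩ := exists_nat_gt (max M 0 + 2)
          refine ⟨N, fun n hn => ?_⟩
          have hnM : max M 0 + 2 < (n:ℝ) := lt_of_lt_of_le hN (by exact_mod_cast hn)
          have hM1 : M < (n:ℝ) - 1 := by
            have := le_max_left M 0
            linarith
          have i1 : divDiff F ![(n:ℝ)+2, (n:ℝ)+3, (n:ℝ)+4]
              ≤ divDiff F ![(n:ℝ)+1+t, (n:ℝ)+2, (n:ℝ)+3] :=
            dd_mono hM (by linarith) (by linarith) (by linarith) (by linarith)
          have i2 : divDiff F ![(n:ℝ)+1+t, (n:ℝ)+2, (n:ℝ)+3]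
              ≤ divDiff F ![(n:ℝ)+1, (n:ℝ)+1+t, (n:ℝ)+2] :=
            dd_mono hM (by linarith) (by linarith) (by linarith) (by linarith)
          linarith
        · -- upper bound eventually
          rw [eventually_atTop]
          obtain ⟨N, hN⟩ := exists_nat_gt (max M 0 + 2)
          refine ⟨N, fun n hn => ?_⟩
          have hnM : max M 0 + 2 < (n:ℝ) := lt_of_lt_of_le hN (by exact_mod_cast hn)
          have hM1 : M < (n:ℝ) - 1 := by
            have := le_max_left M 0
            linarith
          have i1 : divDiff F ![(n:ℝ), (n:ℝ)+1, (n:ℝ)+1+t]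
              ≤ divDiff F ![(n:ℝ)-1, (n:ℝ), (n:ℝ)+1] :=
            dd_mono hM (by linarith) (by linarith) (by linarith) (by linarith)
          have i2 : divDiff F ![(n:ℝ)+1, (n:ℝ)+1+t, (n:ℝ)+2]
              ≤ divDiff F ![(n:ℝ), (n:ℝ)+1, (n:ℝ)+1+t] :=
            dd_mono hM (by linarith) (by linarith) (by linarith) (by linarith)
          linarith
      -- now the identity
      have heq : ∀ n : ℕ, F ((n:ℝ) + 1 + t) - F ((n:ℝ) + 1) - t * Real.log (g n)
          = t * (Real.log (g ((n:ℝ) + 1)) - Real.log (g n))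
            + (t * (t - 1)) * divDiff F ![(n:ℝ) + 1, (n:ℝ) + 1 + t, (n:ℝ) + 2] := by
        intro n
        have hN := newton3 F (show (n:ℝ) + 1 < (n:ℝ) + 1 + t by linarith)
          (show (n:ℝ) + 1 + t < (n:ℝ) + 2 by linarith)
        have e2 : F ((n:ℝ) + 2) = F ((n:ℝ) + 1) + Real.log (g ((n:ℝ) + 1)) := by
          have := hFstep ((n:ℝ) + 1) (by positivity)
          rw [show (n:ℝ) + 2 = (n:ℝ) + 1 + 1 by ring, this]
        rw [e2] at hN
        have hb : (n:ℝ) + 1 + t - ((n:ℝ) + 1) = t := by ring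
        have hc : (n:ℝ) + 2 - ((n:ℝ) + 1) = 1 := by ring
        have hbc : (n:ℝ) + 1 + t - ((n:ℝ) + 2) = t - 1 := by ring
        rw [hb, hc, hbc] at hN
        have : F ((n:ℝ) + 1 + t) - F ((n:ℝ) + 1)
            = t * Real.log (g ((n:ℝ) + 1))
              + t * (t - 1) * divDiff F ![(n:ℝ) + 1, (n:ℝ) + 1 + t, (n:ℝ) + 2] := by
          rw [hN]; ring
        rw [this]; ring
      have hlim := ((LgwN 1 one_pos).const_mul t).add (Dlim.const_mul (t * (t - 1)))
      simp only [mul_zero, add_zero] at hlim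
      exact hlim.congr (fun n => (heq n).symm)
  -- main tendsto statement for the error term
  intro x hx
  set m : ℕ := ⌈x⌉₊ - 1 with hm
  have hceil1 : 1 ≤ ⌈x⌉₊ := Nat.ceil_pos.mpr hx
  have hmcast : (m:ℝ) = (⌈x⌉₊ : ℝ) - 1 := by
    rw [hm]; push_cast [Nat.cast_sub hceil1]; ring
  set t : ℝ := x - m with htdef
  have ht0 : 0 < t := by
    have := Nat.ceil_lt_add_one (le_of_lt hx)
    rw [htdef, hmcast]; linarith
  have ht1 : t ≤ 1 := by
    have := Nat.le_ceil x
    rw [htdef, hmcast]; linarith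
  have hxmt : x = (m:ℝ) + t := by rw [htdef]; ring
  -- error term
  have Elim : Tendsto
      (fun n : ℕ => F (x + (n:ℝ) + 1) - F ((n:ℝ) + 1) - x * Real.log (g n)) atTop (nhds 0) := by
    have hsumlim : Tendsto (fun n : ℕ =>
        ∑ j ∈ Finset.range m, (Real.log (g ((n:ℝ) + 1 + t + j)) - Real.log (g n)))
        atTop (nhds 0) := by
      have : Tendsto (fun n : ℕ =>
          ∑ j ∈ Finset.range m, (Real.log (g ((n:ℝ) + 1 + t + j)) - Real.log (g n)))
          atTop (nhds (∑ j ∈ Finset.range m, (0:ℝ))) := by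
        apply tendsto_finset_sum
        intro j _
        have hw : (0:ℝ) < 1 + t + j := by positivity
        have := LgwN (1 + t + j) hw
        apply this.congr
        intro n
        rw [show (n:ℝ) + (1 + t + j) = (n:ℝ) + 1 + t + j by ring]
      simpa using this
    have htot := (Ecore t ht0 ht1).add hsumlim
    simp only [add_zero] at htot
    apply htot.congr
    intro n
    have hy : (0:ℝ) < (n:ℝ) + 1 + t := by positivity
    have hsum := hFsum ((n:ℝ) + 1 + t) hy m
    have harg : x + (n:ℝ) + 1 = (n:ℝ) + 1 + t + (m:ℝ) := by rw [hxmt]; ring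
    rw [harg, hsum, hxmt]
    rw [Finset.sum_sub_distrib]
    simp only [Finset.sum_const, Finset.card_range, nsmul_eq_mul]
    ring
  -- product formulas
  have ffact1 : ∀ n : ℕ, f ((n:ℝ) + 1) = ∏ k ∈ Finset.Icc 1 n, g k := by
    intro n
    induction n with
    | zero => simpa using hf1
    | succ n ih =>
      rw [Finset.prod_Icc_succ_top (Nat.succ_le_succ (Nat.zero_le n)), ← ih]
      have := hfe ((n:ℝ) + 1) (by positivity)
      push_cast
      rw [show (n:ℝ) + 1 + 1 = ((n:ℝ) + 1) + 1 by ring, this]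
      ring
  have ffact2 : ∀ n : ℕ, f (x + n) = f x * ∏ k ∈ Finset.range n, g (x + k) := by
    intro n
    induction n with
    | zero => simp
    | succ n ih =>
      rw [Finset.prod_range_succ]
      have := hfe (x + n) (by positivity)
      push_cast
      rw [show x + ((n:ℝ) + 1) = (x + (n:ℝ)) + 1 by ring, this, ih]
      ring
  -- final assembly
  have hfinal : Tendsto (fun n : ℕ => f x * Real.exp
      (-(F (x + (n:ℝ) + 1) - F ((n:ℝ) + 1) - x * Real.log (g n)))) atTop (nhds (f x)) := by
    have h1 : Tendsto (fun n : ℕ =>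
        -(F (x + (n:ℝ) + 1) - F ((n:ℝ) + 1) - x * Real.log (g n))) atTop (nhds 0) := by
      simpa using Elim.neg
    have h2 := (Real.continuous_exp.continuousAt (x := (0:ℝ))).tendsto.comp h1
    simp only [Function.comp, Real.exp_zero] at h2
    have h3 := h2.const_mul (f x)
    simpa using h3
  apply hfinal.congr'
  rw [EventuallyEq, eventually_atTop]
  refine ⟨1, fun n hn => ?_⟩
  have hnpos : (0:ℝ) < (n:ℝ) := by exact_mod_cast hn
  have hfn1 : 0 < f ((n:ℝ) + 1) := hf _ (by positivity)
  have hfxn1 : 0 < f (x + (n:ℝ) + 1) := hf _ (by positivity)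
  have hgn : 0 < g (n:ℝ) := hg _ hnpos
  have hfx : 0 < f x := hf x hx
  have hprod2 : ∏ k ∈ Finset.range (n + 1), g (x + k) = f (x + (n:ℝ) + 1) / f x := by
    have := ffact2 (n + 1)
    push_cast at this
    rw [show x + (n:ℝ) + 1 = x + ((n:ℝ) + 1) by ring, this]
    field_simp
  unfold gammaTypeSeq
  rw [hprod2, ← ffact1 n]
  rw [Real.rpow_def_of_pos hgn]
  have hFval1 : f ((n:ℝ) + 1) = Real.exp (F ((n:ℝ) + 1)) := (Real.exp_log hfn1).symm
  have hFval2 : f (x + (n:ℝ) + 1) = Real.exp (F (x + (n:ℝ) + 1)) := (Real.exp_log hfxn1).symm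
  rw [hFval1, hFval2]
  rw [div_div_eq_mul_div]
  rw [eq_div_iff (Real.exp_pos _).ne', mul_assoc, ← Real.exp_add,
    show -(F (x + (n:ℝ) + 1) - F ((n:ℝ) + 1) - x * Real.log (g (n:ℝ))) + F (x + (n:ℝ) + 1)
      = F ((n:ℝ) + 1) + Real.log (g (n:ℝ)) * x by ring, Real.exp_add]
  ring
end

section
/- Let f : D → ℝ with ℕ* ⊆ D and suppose f is limit summable with limit summand function f_σ (i.e., f_{σ_n}(x) = x f(n) + ∑_{k=1}^n (f(k) − f(x+k)) converges to f_σ(x) for all x in Σ_f, with R(f,1) = lim (f(n) − f(1+n)) = 0 and D ⊆ D−1). Then f_σ(x) = f(x) + f_σ(x−1) for all x ∈ D, and f_σ(m) = ∑_{j=1}^m f(j) for every positive integer m. -/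
open Filter Finset Real

theorem limit_summand_difference_equation (D : Set ℝ) (f fσ : ℝ → ℝ)
    (hND : ∀ n : ℕ, 1 ≤ n → ((n : ℝ)) ∈ D)
    (hD1 : ∀ x ∈ D, x + 1 ∈ D)
    (hsum : ∀ x : ℝ, (∀ n : ℕ, 1 ≤ n → x + (n : ℝ) ∈ D) →
      Tendsto (fun n : ℕ => x * f n + ∑ k ∈ Finset.Icc 1 n, (f k - f (x + k)))
        atTop (nhds (fσ x)))
    (hR1 : Tendsto (fun n : ℕ => f n - f (1 + n)) atTop (nhds 0)) :
    (∀ x ∈ D, fσ x = f x + fσ (x - 1)) ∧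
    (∀ m : ℕ, 1 ≤ m → fσ m = ∑ j ∈ Finset.Icc 1 m, f j) := by
  -- membership lemmas
  have hxD : ∀ x ∈ D, ∀ n : ℕ, 1 ≤ n → x + (n : ℝ) ∈ D := by
    intro x hx n hn
    induction n with
    | zero => omega
    | succ m ih =>
      rcases Nat.eq_zero_or_pos m with h | h
      · subst h; simpa using hD1 x hx
      · have hmem := hD1 _ (ih h)
        have e : x + ((m + 1 : ℕ) : ℝ) = x + (m : ℝ) + 1 := by push_cast; ring
        rw [e]; exact hmem
  have hx1 : ∀ x ∈ D, ∀ n : ℕ, 1 ≤ n → x - 1 + (n : ℝ) ∈ D := by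
    intro x hx n hn
    obtain ⟨m, rfl⟩ := Nat.exists_eq_add_of_le hn
    rcases Nat.eq_zero_or_pos m with h | h
    · subst h
      have e : x - 1 + ((1 + 0 : ℕ) : ℝ) = x := by push_cast; ring
      rw [e]; exact hx
    · have hmem := hxD x hx m h
      have e : x - 1 + ((1 + m : ℕ) : ℝ) = x + (m : ℝ) := by push_cast; ring
      rw [e]; exact hmem
  -- f(n+1) - f(n) → 0
  have hf1 : Tendsto (fun n : ℕ => f ((n + 1 : ℕ) : ℝ) - f n) atTop (nhds 0) := by
    have h := hR1.neg
    rw [neg_zero] at h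
    refine h.congr (fun n => ?_)
    have : (1 : ℝ) + (n : ℝ) = ((n + 1 : ℕ) : ℝ) := by push_cast; ring
    rw [← this]; ring
  -- key: for summable points, f n - f (x + n) → 0
  have key : ∀ x : ℝ, (∀ n : ℕ, 1 ≤ n → x + (n : ℝ) ∈ D) →
      Tendsto (fun n : ℕ => f n - f (x + n)) atTop (nhds 0) := by
    intro x hx
    set g : ℕ → ℝ := fun n => x * f n + ∑ k ∈ Finset.Icc 1 n, (f k - f (x + k)) with hg
    have hgl := hsum x hx
    have hdiff : Tendsto (fun n : ℕ => g (n + 1) - g n) atTop (nhds 0) := by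
      have h := (hgl.comp (tendsto_add_atTop_nat 1)).sub hgl
      rw [sub_self] at h
      exact h
    have h2 : Tendsto (fun n : ℕ => (g (n + 1) - g n) - x * (f ((n + 1 : ℕ) : ℝ) - f n))
        atTop (nhds 0) := by
      have := hdiff.sub (hf1.const_mul x)
      simpa using this
    have heq : ∀ n : ℕ, (g (n + 1) - g n) - x * (f ((n + 1 : ℕ) : ℝ) - f n)
        = f ((n + 1 : ℕ) : ℝ) - f (x + ((n + 1 : ℕ) : ℝ)) := by
      intro n
      simp only [hg]
      rw [Finset.sum_Icc_succ_top (by omega : 1 ≤ n + 1)]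
      ring
    have h3 : Tendsto (fun n : ℕ => f ((n + 1 : ℕ) : ℝ) - f (x + ((n + 1 : ℕ) : ℝ)))
        atTop (nhds 0) := by
      refine h2.congr (fun n => heq n)
    exact (tendsto_add_atTop_iff_nat 1).mp h3
  -- telescoping sum
  have tele : ∀ x : ℝ, ∀ n : ℕ, 1 ≤ n →
      ∑ k ∈ Finset.Icc 1 n, (f (x - 1 + k) - f (x + k)) = f x - f (x + n) := by
    intro x n hn
    induction n with
    | zero => omega
    | succ m ih =>
      rcases Nat.eq_or_lt_of_le hn with h | h
      · simp [← h]
      · have hm : 1 ≤ m := by omega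
        rw [Finset.sum_Icc_succ_top (by omega : 1 ≤ m + 1), ih hm]
        have e1 : x - 1 + ((m + 1 : ℕ) : ℝ) = x + (m : ℝ) := by push_cast; ring
        rw [e1]; ring
  -- part 1: difference equation
  have part1 : ∀ x ∈ D, fσ x = f x + fσ (x - 1) := by
    intro x hx
    have hx2 := hsum x (hxD x hx)
    have hx3 := hsum (x - 1) (hx1 x hx)
    have hkey := key x (hxD x hx)
    have hcomb := (hx2.sub hx3).sub hkey
    have heq : (fun n : ℕ => (x * f n + ∑ k ∈ Finset.Icc 1 n, (f k - f (x + k)))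
        - ((x - 1) * f n + ∑ k ∈ Finset.Icc 1 n, (f k - f (x - 1 + k)))
        - (f n - f (x + n))) =ᶠ[atTop] (fun _ => f x) := by
      filter_upwards [eventually_ge_atTop 1] with n hn
      have hs : ∑ k ∈ Finset.Icc 1 n, (f k - f (x + k))
          - ∑ k ∈ Finset.Icc 1 n, (f k - f (x - 1 + k))
          = ∑ k ∈ Finset.Icc 1 n, (f (x - 1 + k) - f (x + k)) := by
        rw [← Finset.sum_sub_distrib]
        exact Finset.sum_congr rfl (fun k _ => by ring)
      linear_combination hs + tele x n hn
    have hconst : Tendsto (fun _ : ℕ => f x) atTop (nhds (fσ x - fσ (x - 1) - 0)) :=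
      hcomb.congr' heq
    have := tendsto_nhds_unique hconst tendsto_const_nhds
    linarith
  refine ⟨part1, ?_⟩
  -- fσ 0 = 0
  have h0 : fσ 0 = 0 := by
    have h := hsum 0 (fun n hn => by simpa using hND n hn)
    have h' : Tendsto (fun _ : ℕ => (0 : ℝ)) atTop (nhds (fσ 0)) := by
      refine h.congr (fun n => ?_)
      simp
    exact tendsto_nhds_unique h' tendsto_const_nhds
  intro m hm
  induction m with
  | zero => omega
  | succ k ih =>
    rcases Nat.eq_or_lt_of_le hm with h | h
    · have := part1 1 (by simpa using hND 1 (le_refl 1))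
      simp [← h, this, h0]
    · have hk : 1 ≤ k := by omega
      have hkD : ((k + 1 : ℕ) : ℝ) ∈ D := hND (k + 1) (by omega)
      have := part1 _ hkD
      rw [Finset.sum_Icc_succ_top (by omega : 1 ≤ k + 1), ← ih hk, this]
      have e : ((k + 1 : ℕ) : ℝ) - 1 = (k : ℝ) := by push_cast; ring
      rw [e]; ring
end

section
/- Let 0 < b ≠ 1 and 0 < a < 1, and define f(x) = aˣ + log_b x on (0,∞). Then f is limit summable and its limit summand function is f_σ(x) = (a/(a−1))(aˣ − 1) + log_b Γ(x+1), i.e., for every x > 0 the sequence f_{σ_n}(x) = x f(n) + ∑_{k=1}^n (f(k) − f(x+k)) converges to (a/(a−1))(aˣ − 1) + log_b Γ(x+1). -/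
open Filter Finset Real

theorem limit_summable_exp_add_logb (a b : ℝ)
    (ha0 : 0 < a) (ha1 : a < 1) (hb0 : 0 < b) (hb1 : b ≠ 1) :
    ∀ x > (0 : ℝ),
      Tendsto (fun n : ℕ =>
          x * (a ^ (n : ℝ) + Real.logb b n) +
            ∑ k ∈ Finset.Icc 1 n,
              ((a ^ (k : ℝ) + Real.logb b k) - (a ^ (x + k) + Real.logb b (x + k))))
        atTop
        (nhds (a / (a - 1) * (a ^ x - 1) + Real.logb b (Real.Gamma (x + 1)))) := by
  intro x hx
  have ha1' : a - 1 ≠ 0 := by linarith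
  have haxpos : (0 : ℝ) < a ^ x := Real.rpow_pos_of_pos ha0 x
  -- Part A
  have h1 : Tendsto (fun n : ℕ => (a : ℝ) ^ n) atTop (nhds 0) :=
    tendsto_pow_atTop_nhds_zero_of_lt_one ha0.le ha1
  have hA : Tendsto (fun n : ℕ => x * a ^ n + (1 - a ^ x) * (a * (a ^ n - 1) / (a - 1)))
      atTop (nhds (x * 0 + (1 - a ^ x) * (a * (0 - 1) / (a - 1)))) := by
    exact (h1.const_mul x).add
      (((((h1.sub_const 1).const_mul a).div_const (a - 1))).const_mul _)
  have hAeq : ∀ n : ℕ,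
      x * a ^ (n : ℝ) + ∑ k ∈ Finset.Icc 1 n, (a ^ (k : ℝ) - a ^ (x + k))
        = x * a ^ n + (1 - a ^ x) * (a * (a ^ n - 1) / (a - 1)) := by
    intro n
    have hsum : ∑ k ∈ Finset.Icc 1 n, (a ^ (k : ℝ) - a ^ (x + k))
        = (1 - a ^ x) * ∑ k ∈ Finset.Icc 1 n, a ^ k := by
      rw [Finset.mul_sum]
      refine Finset.sum_congr rfl fun k _ => ?_
      rw [Real.rpow_add ha0, Real.rpow_natCast]
      ring
    have hgeom : ∑ k ∈ Finset.Icc 1 n, a ^ k = a * (a ^ n - 1) / (a - 1) := by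
      rw [← Finset.Ico_add_one_right_eq_Icc, Finset.sum_Ico_eq_sum_range, Nat.add_sub_cancel]
      have : ∀ i : ℕ, a ^ (1 + i) = a * a ^ i := fun i => by rw [pow_add, pow_one]
      rw [Finset.sum_congr rfl fun i _ => this i, ← Finset.mul_sum,
        geom_sum_eq (by intro h; rw [h] at ha1; linarith) n]
      ring
    rw [hsum, hgeom, Real.rpow_natCast]
  -- Part B
  have hGx : (0 : ℝ) < Real.Gamma x := Real.Gamma_pos_of_pos hx
  have hBlim : Tendsto (fun n : ℕ => Real.logb b (x * Real.GammaSeq x n)) atTop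
      (nhds (Real.logb b (Real.Gamma (x + 1)))) := by
    have h2 : Tendsto (fun n : ℕ => x * Real.GammaSeq x n) atTop
        (nhds (x * Real.Gamma x)) := (Real.GammaSeq_tendsto_Gamma x).const_mul x
    have hne : x * Real.Gamma x ≠ 0 := by positivity
    have hlog : Tendsto (fun n : ℕ => Real.log (x * Real.GammaSeq x n)) atTop
        (nhds (Real.log (x * Real.Gamma x))) :=
      (Real.continuousAt_log hne).tendsto.comp h2
    have : Real.Gamma (x + 1) = x * Real.Gamma x := Real.Gamma_add_one hx.ne'
    rw [this]
    simpa only [Real.logb] using hlog.div_const (Real.log b)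
  have hBeq : ∀ n : ℕ, 1 ≤ n →
      x * Real.logb b n + ∑ k ∈ Finset.Icc 1 n, (Real.logb b k - Real.logb b (x + k))
        = Real.logb b (x * Real.GammaSeq x n) := by
    intro n hn
    have hnpos : (0 : ℝ) < n := by exact_mod_cast hn
    have hprodpos : (0 : ℝ) < ∏ k ∈ Finset.Icc 1 n, (x + (k : ℝ)) :=
      Finset.prod_pos fun k _ => by positivity
    have hxG : x * Real.GammaSeq x n
        = (n : ℝ) ^ x * (Nat.factorial n : ℝ) / ∏ k ∈ Finset.Icc 1 n, (x + (k : ℝ)) := by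
      rw [Real.GammaSeq]
      have : ∏ j ∈ Finset.range (n + 1), (x + (j : ℝ))
          = x * ∏ k ∈ Finset.Icc 1 n, (x + (k : ℝ)) := by
        rw [Finset.prod_range_succ', ← Finset.Ico_add_one_right_eq_Icc, Finset.prod_Ico_eq_prod_range]
        simp only [Nat.add_sub_cancel, Nat.cast_zero, add_zero, Nat.cast_add, Nat.cast_one]
        rw [mul_comm]
        congr 1
        refine Finset.prod_congr rfl fun i _ => ?_
        push_cast; ring
      rw [this]
      field_simp
    have hfact : Real.log (Nat.factorial n : ℝ) = ∑ k ∈ Finset.Icc 1 n, Real.log k := by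
      rw [← Finset.prod_Ico_id_eq_factorial, Finset.Ico_add_one_right_eq_Icc, Nat.cast_prod]
      exact Real.log_prod fun k hk => by
        have : 1 ≤ k := (Finset.mem_Icc.mp hk).1
        positivity
    have hlogsum : Real.log (x * Real.GammaSeq x n)
        = x * Real.log n + ∑ k ∈ Finset.Icc 1 n, (Real.log k - Real.log (x + k)) := by
      rw [hxG, Real.log_div (by positivity) hprodpos.ne',
        Real.log_mul (by positivity) (by positivity), Real.log_rpow hnpos, hfact,
        Real.log_prod fun k _ => by positivity, Finset.sum_sub_distrib]
      ring
    simp only [Real.logb, hlogsum, Finset.sum_div, add_div, mul_div_assoc, sub_div]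
  -- combine
  have hfinal : Tendsto (fun n : ℕ =>
      (x * a ^ (n : ℝ) + ∑ k ∈ Finset.Icc 1 n, (a ^ (k : ℝ) - a ^ (x + k)))
      + (x * Real.logb b n + ∑ k ∈ Finset.Icc 1 n, (Real.logb b k - Real.logb b (x + k))))
      atTop (nhds (a / (a - 1) * (a ^ x - 1) + Real.logb b (Real.Gamma (x + 1)))) := by
    have hA' : Tendsto (fun n : ℕ =>
        x * a ^ (n : ℝ) + ∑ k ∈ Finset.Icc 1 n, (a ^ (k : ℝ) - a ^ (x + k)))
        atTop (nhds (a / (a - 1) * (a ^ x - 1))) := by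
      have : x * 0 + (1 - a ^ x) * (a * (0 - 1) / (a - 1)) = a / (a - 1) * (a ^ x - 1) := by
        field_simp; ring
      rw [← this]
      exact hA.congr fun n => (hAeq n).symm
    have hB' : Tendsto (fun n : ℕ =>
        x * Real.logb b n + ∑ k ∈ Finset.Icc 1 n, (Real.logb b k - Real.logb b (x + k)))
        atTop (nhds (Real.logb b (Real.Gamma (x + 1)))) := by
      refine hBlim.congr' ?_
      filter_upwards [eventually_ge_atTop 1] with n hn
      exact (hBeq n hn).symm
    exact hA'.add hB'
  refine hfinal.congr fun n => ?_
  have hsplit : ∑ k ∈ Finset.Icc 1 n,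
      ((a ^ (k : ℝ) + Real.logb b k) - (a ^ (x + k) + Real.logb b (x + k)))
      = ∑ k ∈ Finset.Icc 1 n, (a ^ (k : ℝ) - a ^ (x + k))
        + ∑ k ∈ Finset.Icc 1 n, (Real.logb b k - Real.logb b (x + k)) := by
    rw [← Finset.sum_add_distrib]
    exact Finset.sum_congr rfl fun k _ => by ring
  rw [hsplit]
  ring
end

section
/- Let g : ℝ⁺ → ℝ⁺ with g(n+1)/g(n) → l, 0 < l ≤ 1, and f : ℝ⁺ → ℝ⁺ eventually log-convex with f(x+1) = g(x) f(x). Then there exists a constant c > 0 such that f(x+1) = c · l^{(x²+x)/2} · exp((log g)_σ(x)) for all x > 0, where (log g)_σ(x) = lim_{n→∞} [x log g(n) + ∑_{k=1}^n (log g(k) − log g(x+k))]. -/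
open Filter Finset Real

private lemma slope_helper {M : ℝ} {h : ℝ → ℝ} (hc : ConvexOn ℝ (Set.Ioi M) h)
    {a b c d : ℝ} (haM : M < a) (hcM : M < c) (hab : a < b) (hcd : c < d)
    (hac : a ≤ c) (hbd : b ≤ d) :
    (h b - h a) / (b - a) ≤ (h d - h c) / (d - c) := by
  have hbM : M < b := haM.trans hab
  have hdM : M < d := hcM.trans hcd
  have had : a < d := lt_of_le_of_lt hac hcd
  have s1 : (h b - h a) / (b - a) ≤ (h d - h a) / (d - a) :=
    hc.secant_mono (Set.mem_Ioi.mpr haM) (Set.mem_Ioi.mpr hbM) (Set.mem_Ioi.mpr hdM)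
      hab.ne' had.ne' hbd
  have s2 : (h a - h d) / (a - d) ≤ (h c - h d) / (c - d) :=
    hc.secant_mono (Set.mem_Ioi.mpr hdM) (Set.mem_Ioi.mpr haM) (Set.mem_Ioi.mpr hcM)
      had.ne hcd.ne hac
  have e1 : (h a - h d) / (a - d) = (h d - h a) / (d - a) := by
    rw [← neg_sub (h d), ← neg_sub d, neg_div_neg_eq]
  have e2 : (h c - h d) / (c - d) = (h d - h c) / (d - c) := by
    rw [← neg_sub (h d), ← neg_sub d, neg_div_neg_eq]
  calc (h b - h a) / (b - a) ≤ (h d - h a) / (d - a) := s1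
    _ = (h a - h d) / (a - d) := e1.symm
    _ ≤ (h c - h d) / (c - d) := s2
    _ = (h d - h c) / (d - c) := e2

theorem solution_via_limit_summand (g f : ℝ → ℝ) (l : ℝ)
    (hg : ∀ x > 0, 0 < g x) (hf : ∀ x > 0, 0 < f x)
    (hl0 : 0 < l) (hl1 : l ≤ 1)
    (hseq : Tendsto (fun n : ℕ => g ((n : ℝ) + 1) / g n) atTop (nhds l))
    (hconv : ∃ M : ℝ, ConvexOn ℝ (Set.Ioi M) (fun x => Real.log (f x)))
    (hfe : ∀ x > 0, f (x + 1) = g x * f x) :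
    ∃ c > 0, ∀ x > 0, ∃ L : ℝ,
      Tendsto (fun n : ℕ =>
          x * Real.log (g n) +
            ∑ k ∈ Finset.Icc 1 n, (Real.log (g k) - Real.log (g (x + k))))
        atTop (nhds L) ∧
      f (x + 1) = c * l ^ ((x ^ 2 + x) / 2) * Real.exp L := by
  obtain ⟨M₀, hcv₀⟩ := hconv
  set h : ℝ → ℝ := fun x => Real.log (f x) with hh
  set M : ℝ := max M₀ 0 with hM
  have hM0 : 0 ≤ M := le_max_right _ _
  have hcv : ConvexOn ℝ (Set.Ioi M) h :=
    hcv₀.subset (Set.Ioi_subset_Ioi (le_max_left _ _)) (convex_Ioi M)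
  -- functional equation for logs
  have hlog : ∀ t > 0, Real.log (g t) = h (t + 1) - h t := by
    intro t ht
    have : f (t + 1) = g t * f t := hfe t ht
    rw [hh]
    simp only []
    rw [this, Real.log_mul (hg t ht).ne' (hf t ht).ne']
    ring
  -- monotonicity of log g on (M, ∞)
  have dmono : ∀ s t : ℝ, M < s → s ≤ t → Real.log (g s) ≤ Real.log (g t) := by
    intro s t hs hst
    have hs0 : 0 < s := lt_of_le_of_lt hM0 hs
    have ht0 : 0 < t := lt_of_lt_of_le hs0 hst
    have := slope_helper hcv hs (lt_of_lt_of_le hs hst)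
      (by linarith : s < s + 1) (by linarith : t < t + 1) hst (by linarith)
    rw [hlog s hs0, hlog t ht0]
    have e1 : s + 1 - s = 1 := by ring
    have e2 : t + 1 - t = 1 := by ring
    rw [e1, e2, div_one, div_one] at this
    exact this
  -- l = 1
  have hquot : Tendsto (fun n : ℕ => Real.log (g ((n : ℝ) + 1) / g n)) atTop (nhds (Real.log l)) :=
    ((Real.continuousAt_log hl0.ne').tendsto).comp hseq
  obtain ⟨N₀, hN₀⟩ := exists_nat_gt M
  have hloggl : 0 ≤ Real.log l := by
    refine ge_of_tendsto hquot ?_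
    filter_upwards [eventually_ge_atTop (N₀ + 1)] with n hn
    have hnM : M < (n : ℝ) := lt_of_lt_of_le hN₀ (by exact_mod_cast Nat.le_of_succ_le hn)
    have hn0 : (0:ℝ) < n := lt_of_le_of_lt hM0 hnM
    have hn10 : (0:ℝ) < (n:ℝ) + 1 := by linarith
    rw [Real.log_div (hg _ hn10).ne' (hg _ hn0).ne']
    have := dmono n ((n:ℝ)+1) hnM (by linarith)
    linarith
  have hl : l = 1 := by
    have : Real.log l = 0 := le_antisymm (Real.log_nonpos hl0.le hl1) hloggl
    have := congrArg Real.exp this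
    rwa [Real.exp_log hl0, Real.exp_zero] at this
  -- log g (n+1) - log g n → 0
  have he : Tendsto (fun n : ℕ => Real.log (g ((n:ℝ) + 1)) - Real.log (g n)) atTop (nhds 0) := by
    have h0 : Real.log l = 0 := by rw [hl, Real.log_one]
    rw [← h0]
    refine hquot.congr' ?_
    filter_upwards [eventually_ge_atTop 1] with n hn
    have hn0 : (0:ℝ) < n := by exact_mod_cast hn
    rw [Real.log_div (hg _ (by linarith)).ne' (hg _ hn0).ne']
  -- shifted differences → 0
  have hshift : ∀ m : ℕ, Tendsto (fun n : ℕ => Real.log (g ((n + m : ℕ) : ℝ)) - Real.log (g n))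
      atTop (nhds 0) := by
    intro m
    induction m with
    | zero => simpa using tendsto_const_nhds
    | succ m ih =>
      have h1 : Tendsto (fun n : ℕ => Real.log (g (((n + m : ℕ) : ℝ) + 1))
          - Real.log (g ((n + m : ℕ) : ℝ))) atTop (nhds 0) :=
        he.comp (tendsto_add_atTop_nat m)
      have := h1.add ih
      rw [add_zero] at this
      refine this.congr fun n => ?_
      push_cast
      ring
  -- main part
  refine ⟨f 1, hf 1 one_pos, fun x hx => ?_⟩
  set L : ℝ := h (x + 1) - h 1 with hL
  refine ⟨L, ?_, ?_⟩
  · -- telescoping sums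
    have tele1 : ∀ n : ℕ, ∑ k ∈ Finset.Icc 1 n, Real.log (g k)
        = h ((n : ℝ) + 1) - h 1 := by
      intro n
      induction n with
      | zero => simp
      | succ n ih =>
        rw [Finset.sum_Icc_succ_top (Nat.one_le_iff_ne_zero.mpr (Nat.succ_ne_zero n)), ih]
        have hn0 : (0:ℝ) < (n:ℝ) + 1 := by positivity
        push_cast
        rw [hlog ((n:ℝ)+1) hn0]
        ring
    have tele2 : ∀ n : ℕ, ∑ k ∈ Finset.Icc 1 n, Real.log (g (x + k))
        = h (x + (n : ℝ) + 1) - h (x + 1) := by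
      intro n
      induction n with
      | zero => simp
      | succ n ih =>
        rw [Finset.sum_Icc_succ_top (Nat.one_le_iff_ne_zero.mpr (Nat.succ_ne_zero n)), ih]
        have hn0 : (0:ℝ) < x + (n:ℝ) + 1 := by positivity
        have hl2 := hlog (x + (n:ℝ) + 1) hn0
        push_cast
        rw [show x + ((n:ℝ)+1) = x + (n:ℝ) + 1 by ring,
          show x + (n:ℝ) + 1 + 1 = x + (n:ℝ) + 1 + 1 by ring, hl2]
        ring
    -- b n → 0
    set m : ℕ := ⌈x⌉₊ with hmdef
    have hxm : x ≤ m := Nat.le_ceil x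
    have hb : Tendsto (fun n : ℕ => x * Real.log (g n) + h ((n:ℝ) + 1) - h (x + (n:ℝ) + 1))
        atTop (nhds 0) := by
      have hlow : Tendsto (fun n : ℕ => -(x * (Real.log (g ((n + (m+1) : ℕ) : ℝ)) - Real.log (g n))))
          atTop (nhds 0) := by
        have := ((hshift (m+1)).const_mul x).neg
        simpa using this
      refine tendsto_of_tendsto_of_tendsto_of_le_of_le' hlow tendsto_const_nhds ?_ ?_
      · filter_upwards [eventually_ge_atTop (N₀ + 1)] with n hn
        have hnM : M < (n : ℝ) := lt_of_lt_of_le hN₀ (by exact_mod_cast Nat.le_of_succ_le hn)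
        have hn0 : (0:ℝ) < n := lt_of_le_of_lt hM0 hnM
        -- upper slope: (h(n+1+x)-h(n+1))/x ≤ log g (n+m+1)
        have hupper := slope_helper hcv (by linarith : M < (n:ℝ) + 1)
          (by push_cast; linarith [Nat.cast_nonneg (α := ℝ) m] : M < ((n + (m+1) : ℕ) : ℝ))
          (by linarith : (n:ℝ) + 1 < (n:ℝ) + 1 + x)
          (by push_cast; linarith : ((n + (m+1) : ℕ) : ℝ) < ((n + (m+1) : ℕ) : ℝ) + 1)
          (by push_cast; linarith [Nat.cast_nonneg (α := ℝ) m] : (n:ℝ) + 1 ≤ ((n + (m+1) : ℕ) : ℝ))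
          (by push_cast; linarith : (n:ℝ) + 1 + x ≤ ((n + (m+1) : ℕ) : ℝ) + 1)
        have hnm0 : (0:ℝ) < ((n + (m+1) : ℕ) : ℝ) := by push_cast; positivity
        rw [hlog _ hnm0]
        have e2 : ((n + (m+1) : ℕ) : ℝ) + 1 - ((n + (m+1) : ℕ) : ℝ) = 1 := by ring
        rw [e2, div_one] at hupper
        have e3 : (n:ℝ) + 1 + x - ((n:ℝ) + 1) = x := by ring
        rw [e3] at hupper
        have := (div_le_iff₀ hx).mp hupper
        have harg : h (x + (n:ℝ) + 1) = h ((n:ℝ) + 1 + x) := by ring_nf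
        rw [harg]
        nlinarith
      · filter_upwards [eventually_ge_atTop (N₀ + 1)] with n hn
        have hnM : M < (n : ℝ) := lt_of_lt_of_le hN₀ (by exact_mod_cast Nat.le_of_succ_le hn)
        have hn0 : (0:ℝ) < n := lt_of_le_of_lt hM0 hnM
        have hlower := slope_helper hcv hnM (by linarith : M < (n:ℝ) + 1)
          (by linarith : (n:ℝ) < (n:ℝ) + 1)
          (by linarith : (n:ℝ) + 1 < (n:ℝ) + 1 + x)
          (by linarith) (by linarith)
        have e1 : (n:ℝ) + 1 - (n:ℝ) = 1 := by ring
        have e3 : (n:ℝ) + 1 + x - ((n:ℝ) + 1) = x := by ring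
        rw [e1, e3, div_one] at hlower
        rw [hlog (n:ℝ) hn0]
        have := (le_div_iff₀ hx).mp hlower
        have harg : h (x + (n:ℝ) + 1) = h ((n:ℝ) + 1 + x) := by ring_nf
        rw [harg]
        nlinarith
    have : Tendsto (fun n : ℕ => (x * Real.log (g n) + h ((n:ℝ) + 1) - h (x + (n:ℝ) + 1)) + L)
        atTop (nhds (0 + L)) := hb.add_const L
    rw [zero_add] at this
    refine this.congr fun n => ?_
    rw [Finset.sum_sub_distrib, tele1 n, tele2 n, hL]
    ring
  · rw [hl, Real.one_rpow, mul_one, hL, hh]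
    simp only []
    rw [Real.exp_sub, Real.exp_log (hf _ (by linarith)), Real.exp_log (hf 1 one_pos)]
    rw [mul_comm (f 1), div_mul_cancel₀ _ (hf 1 one_pos).ne']
end
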